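/- arXiv:1310.8186 — 3 statements merged into one kernel-verified Lean document; each statement's English description precedes it below -/
import Mathlib

section
/- Let G be a 2-connected claw-free graph with maximum degree at most 4 that is K_4-free, and suppose G has a skewed prism H (two triangles x1x2x3, y1y2y3 and linking paths P1,P2,P3) and a separation (G1,G2) with V(G1 ∩ G2) = {u,v} and uv ∉ E(G). Then one of the following holds: (a) H ∩ G1 is empty or H ∩ G2 is empty; or (c) H ∩ G1 is a subpath of one of P1, P2, P3, or H ∩ G2 is a subpath of one of P1, P2, P3. -/
open SimpleGraph

attribute [local instance] Classical.propDecidable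

universe u

namespace Stmt16Aux

variable {V : Type u} {G : SimpleGraph V}

lemma loop_isPath_eq_nil {a : V} (p : G.Walk a a) (hp : p.IsPath) : p = SimpleGraph.Walk.nil := by
  cases p with
  | nil => rfl
  | cons h q =>
    rw [Walk.cons_isPath_iff] at hp
    exact absurd q.end_mem_support hp.2

lemma support_concat {a b : V} (p : G.Walk a b) : p.support = p.support.dropLast ++ [b] := by
  have h1 : p.support.reverse = b :: p.reverse.support.tail := by
    rw [← Walk.support_reverse]; exact Walk.support_eq_cons _
  have h2 : p.support = p.reverse.support.tail.reverse ++ [b] := by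
    conv_lhs => rw [← List.reverse_reverse p.support]
    rw [h1, List.reverse_cons]
  rw [h2, List.dropLast_concat]

lemma path_edges_no_triangle {x y a b c : V} (p : G.Walk x y) (hab : a ≠ b) (hbc : b ≠ c)
    (hac : a ≠ c) :
    p.IsPath → s(a,b) ∈ p.edges → s(b,c) ∈ p.edges → s(a,c) ∈ p.edges → False := by
  induction p with
  | nil => intro _ h; simp at h
  | @cons x w y h q ih =>
    intro hp h1 h2 h3
    rw [Walk.cons_isPath_iff] at hp
    have hxq : ∀ z w', s(z, w') ∈ q.edges → z ≠ x ∧ w' ≠ x := by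
      intro z w' hzw
      constructor
      · rintro rfl; exact hp.2 (q.fst_mem_support_of_mem_edges hzw)
      · rintro rfl; exact hp.2 (q.snd_mem_support_of_mem_edges hzw)
    simp only [Walk.edges_cons, List.mem_cons] at h1 h2 h3
    rcases h1 with h1 | h1 <;> rcases h2 with h2 | h2 <;> rcases h3 with h3 | h3
    · rcases Sym2.eq_iff.mp (h1.trans h2.symm) with ⟨h4, _⟩ | ⟨h4, _⟩
      · exact hab h4
      · exact hac h4
    · rcases Sym2.eq_iff.mp (h1.trans h2.symm) with ⟨h4, _⟩ | ⟨h4, _⟩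
      · exact hab h4
      · exact hac h4
    · rcases Sym2.eq_iff.mp (h1.trans h3.symm) with ⟨_, h4⟩ | ⟨h4, _⟩
      · exact hbc h4
      · exact hac h4
    · -- only h1 = s(x,w)
      have n2 := hxq _ _ h2
      have n3 := hxq _ _ h3
      rcases Sym2.eq_iff.mp h1 with ⟨rfl, _⟩ | ⟨_, rfl⟩
      · exact n3.1 rfl
      · exact n2.1 rfl
    · rcases Sym2.eq_iff.mp (h2.trans h3.symm) with ⟨h4, _⟩ | ⟨h4, _⟩
      · exact hab h4.symm
      · exact hbc h4
    · -- only h2 = s(x,w)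
      have n1 := hxq _ _ h1
      have n3 := hxq _ _ h3
      rcases Sym2.eq_iff.mp h2 with ⟨rfl, _⟩ | ⟨_, rfl⟩
      · exact n1.2 rfl
      · exact n3.2 rfl
    · -- only h3 = s(x,w)
      have n1 := hxq _ _ h1
      have n2 := hxq _ _ h2
      rcases Sym2.eq_iff.mp h3 with ⟨rfl, _⟩ | ⟨_, rfl⟩
      · exact n1.1 rfl
      · exact n2.2 rfl
    · exact ih hp.1 h1 h2 h3

lemma cross {A B : Set V} {u v : V}
    (hedges : ∀ e ∈ G.edgeSet, (∀ x ∈ e, x ∈ A) ∨ (∀ x ∈ e, x ∈ B))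
    (hsep : A ∩ B = {u, v}) {a c : V} (p : G.Walk a c) :
    a ∉ A → c ∈ A →
      ∃ w w', G.Adj w w' ∧ w ∉ A ∧ w' ∈ p.support ∧ (w' = u ∨ w' = v) := by
  induction p with
  | nil => intro ha hc; exact absurd hc ha
  | @cons a b c h q ih =>
    intro ha _hc
    by_cases hb : b ∈ A
    · refine ⟨a, b, h, ha, ?_, ?_⟩
      · rw [Walk.support_cons]
        exact List.mem_cons_of_mem _ q.start_mem_support
      · have hB : b ∈ B := by
          rcases hedges s(a,b) h with hA | hBB
          · exact absurd (hA a (Sym2.mem_mk_left a b)) ha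
          · exact hBB b (Sym2.mem_mk_right a b)
        have hm : b ∈ A ∩ B := ⟨hb, hB⟩
        rw [hsep] at hm
        simpa using hm
    · obtain ⟨w, w', h1, h2, h3, h4⟩ := ih hb _hc
      exact ⟨w, w', h1, h2, by rw [Walk.support_cons]; exact List.mem_cons_of_mem _ h3, h4⟩

lemma k4_of_adj {a b c d : V} (hk4 : G.CliqueFree 4)
    (hab : G.Adj a b) (hac : G.Adj a c) (had : G.Adj a d) (hbc : G.Adj b c)
    (hbd : G.Adj b d) (hcd : G.Adj c d) : False := by
  refine hk4 {a, b, c, d} ⟨?_, ?_⟩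
  · intro x hx y hy hxy
    simp only [Finset.coe_insert, Set.mem_insert_iff, Finset.coe_singleton,
      Set.mem_singleton_iff] at hx hy
    rcases hx with rfl | rfl | rfl | rfl <;> rcases hy with rfl | rfl | rfl | rfl <;>
      first
        | exact absurd rfl hxy
        | assumption
        | (apply SimpleGraph.Adj.symm; assumption)
  · rw [Finset.card_insert_of_notMem (by simp [hab.ne, hac.ne, had.ne]),
      Finset.card_insert_of_notMem (by simp [hbc.ne, hbd.ne]),
      Finset.card_insert_of_notMem (by simp [hcd.ne]), Finset.card_singleton]


section TakeDrop

variable {a b c u v w x y : V}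

lemma support_take_drop (p : G.Walk a c) (h : w ∈ p.support) :
    p.support = (p.takeUntil w h).support ++ (p.dropUntil w h).support.tail := by
  conv_lhs => rw [← Walk.take_spec p h]
  exact Walk.support_append _ _

lemma take_drop_disjoint (p : G.Walk a c) (hp : p.IsPath) (h : w ∈ p.support) {x : V}
    (h1 : x ∈ (p.takeUntil w h).support) (h2 : x ∈ (p.dropUntil w h).support.tail) : False := by
  have hnd := hp.support_nodup
  rw [support_take_drop p h] at hnd
  exact (List.nodup_append'.mp hnd).2.2 h1 h2

lemma mem_take_mem_drop (p : G.Walk a c) (hp : p.IsPath) (h : w ∈ p.support) {x : V}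
    (h1 : x ∈ (p.takeUntil w h).support) (h2 : x ∈ (p.dropUntil w h).support) : x = w := by
  by_contra hxw
  have : x ∈ (p.dropUntil w h).support.tail := by
    have hc := (p.dropUntil w h).support_eq_cons
    rw [hc] at h2
    rcases List.mem_cons.mp h2 with h3 | h3
    · exact absurd h3 hxw
    · exact h3
  exact take_drop_disjoint p hp h h1 this

lemma takeUntil_prefix (p : G.Walk a c) (h : w ∈ p.support) :
    (p.takeUntil w h).support <+: p.support :=
  ⟨(p.dropUntil w h).support.tail, (support_take_drop p h).symm⟩

lemma ord_lemma (p : G.Walk a c) (hp : p.IsPath) (hu : u ∈ p.support) (hv : v ∈ p.support)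
    (hne : u ≠ v) (h1 : v ∈ (p.takeUntil u hu).support) : u ∉ (p.takeUntil v hv).support := by
  intro h2
  have hnd := hp.support_nodup
  have su_pre := takeUntil_prefix p hu
  have sv_pre := takeUntil_prefix p hv
  have hsu : (p.takeUntil u hu).support
      = (p.takeUntil u hu).support.dropLast ++ [u] := support_concat _
  have hsv : (p.takeUntil v hv).support
      = (p.takeUntil v hv).support.dropLast ++ [v] := support_concat _
  rcases List.prefix_or_prefix_of_prefix su_pre sv_pre with ⟨r, hr⟩ | ⟨r, hr⟩
  · by_cases hrnil : r = []
    · subst hrnil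
      rw [List.append_nil] at hr
      have heq : some u = some v := by
        rw [← List.getLast?_concat (l := (p.takeUntil u hu).support.dropLast), ← hsu, hr, hsv,
          List.getLast?_concat]
      exact hne (Option.some.inj heq)
    · have hvr : v ∈ r := by
        have h3 : ((p.takeUntil u hu).support ++ r).getLast? = r.getLast? :=
          List.getLast?_append_of_ne_nil _ hrnil
        rw [hr, hsv, List.getLast?_concat] at h3
        exact List.mem_of_getLast? h3.symm
      have hndv : ((p.takeUntil u hu).support ++ r).Nodup := by
        rw [hr]; exact (sv_pre.sublist).nodup hnd
      exact (List.nodup_append'.mp hndv).2.2 h1 hvr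
  · by_cases hrnil : r = []
    · subst hrnil
      rw [List.append_nil] at hr
      have heq : some v = some u := by
        rw [← List.getLast?_concat (l := (p.takeUntil v hv).support.dropLast), ← hsv, hr, hsu,
          List.getLast?_concat]
      exact hne (Option.some.inj heq).symm
    · have hur : u ∈ r := by
        have h3 : ((p.takeUntil v hv).support ++ r).getLast? = r.getLast? :=
          List.getLast?_append_of_ne_nil _ hrnil
        rw [hr, hsu, List.getLast?_concat] at h3
        exact List.mem_of_getLast? h3.symm
      have hndu : ((p.takeUntil v hv).support ++ r).Nodup := by
        rw [hr]; exact (su_pre.sublist).nodup hnd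
      exact (List.nodup_append'.mp hndu).2.2 h2 hur

end TakeDrop

section Cross

variable {A B : Set V} {u v : V}

lemma conn_absurd (hedges : ∀ e ∈ G.edgeSet, (∀ x ∈ e, x ∈ A) ∨ (∀ x ∈ e, x ∈ B))
    (hsep : A ∩ B = {u, v}) {a c : V} (p : G.Walk a c) (ha : a ∉ A) (hc : c ∈ A)
    (hu : u ∉ p.support) (hv : v ∉ p.support) : False := by
  obtain ⟨w, w', _, _, hs, huv⟩ := cross hedges hsep p ha hc
  rcases huv with rfl | rfl
  · exact hu hs
  · exact hv hs

lemma both_cut_on_path (hedges : ∀ e ∈ G.edgeSet, (∀ x ∈ e, x ∈ A) ∨ (∀ x ∈ e, x ∈ B))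
    (hsep : A ∩ B = {u, v}) {x y : V} (Q : G.Walk x y) (hQ : Q.IsPath)
    (hx : x ∈ A) (hy : y ∈ A) {w : V} (hw : w ∈ Q.support) (hwA : w ∉ A) :
    u ∈ Q.support ∧ v ∈ Q.support := by
  have huvA : ∀ z : V, z = u ∨ z = v → z ∈ A := by
    intro z hz
    have hz2 : z ∈ A ∩ B := by rw [hsep]; rcases hz with rfl | rfl <;> simp
    exact hz2.1
  obtain ⟨_, w1, _, _, hw1s, hw1uv⟩ :=
    cross hedges hsep (Q.takeUntil w hw).reverse hwA hx
  rw [Walk.support_reverse, List.mem_reverse] at hw1s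
  obtain ⟨_, w2, _, _, hw2s, hw2uv⟩ := cross hedges hsep (Q.dropUntil w hw) hwA hy
  have hne12 : w1 ≠ w2 := by
    rintro rfl
    have hww := mem_take_mem_drop Q hQ hw hw1s hw2s
    subst hww
    exact hwA (huvA _ hw1uv)
  have hts := Q.support_takeUntil_subset hw
  have hds := Q.support_dropUntil_subset hw
  rcases hw1uv with rfl | rfl <;> rcases hw2uv with rfl | rfl
  · exact absurd rfl hne12
  · exact ⟨hts hw1s, hds hw2s⟩
  · exact ⟨hds hw2s, hts hw1s⟩
  · exact absurd rfl hne12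

end Cross


section TN

variable {x y x' y' x'' y'' u : V}

lemma not_nil_of_ne' {a b : V} {p : G.Walk a b} (h : a ≠ b) : ¬ p.Nil := by
  intro hn
  have hs := Walk.nil_iff_support_eq.mp hn
  have := p.end_mem_support
  rw [hs] at this
  simp at this
  exact h this.symm

lemma tn_core (hk4 : G.CliqueFree 4)
    {P : G.Walk x y} {Q : G.Walk x' y'} {R : G.Walk x'' y''}
    (hP : P.IsPath)
    (hdPQ : P.support.Disjoint Q.support) (hdPR : P.support.Disjoint R.support)
    (hdQR : Q.support.Disjoint R.support)
    (hxx' : G.Adj x x') (hxx'' : G.Adj x x'') (hx'x'' : G.Adj x' x'')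
    (hyy' : G.Adj y y') (hyy'' : G.Adj y y'') (hy'y'' : G.Adj y' y'')
    (hiff : ∀ a b : V,
      (a ∈ P.support ∨ a ∈ Q.support ∨ a ∈ R.support) →
      (b ∈ P.support ∨ b ∈ Q.support ∨ b ∈ R.support) →
      G.Adj a b →
      s(a,b) ∈ P.edges ∨ s(a,b) ∈ Q.edges ∨ s(a,b) ∈ R.edges ∨
      s(a,b) = s(x,x') ∨ s(a,b) = s(x,x'') ∨ s(a,b) = s(x',x'') ∨
      s(a,b) = s(y,y') ∨ s(a,b) = s(y,y'') ∨ s(a,b) = s(y',y''))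
    (hnn : x ≠ y ∨ x' ≠ y' ∨ x'' ≠ y'')
    (hu : u ∈ P.support) (hcase : u = x ∨ (u ≠ x ∧ u ≠ y)) :
    ∃ a b : V, (a ∈ P.support ∨ a ∈ Q.support ∨ a ∈ R.support) ∧
      (b ∈ P.support ∨ b ∈ Q.support ∨ b ∈ R.support) ∧
      a ≠ b ∧ G.Adj u a ∧ G.Adj u b ∧ ¬ G.Adj a b := by
  rcases hcase with hux | ⟨hux, huy⟩
  · -- u = x
    subst u
    by_cases hxy : x = y
    · -- x = y
      rcases hnn with h | h | h
      · exact absurd hxy h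
      · -- x' ≠ y'
        by_cases h1 : G.Adj x'' y'
        · by_cases h2 : G.Adj x' y'
          · exact (k4_of_adj hk4 hxx' hxx'' (hxy ▸ hyy') hx'x'' h2 h1).elim
          · exact ⟨x', y', Or.inr (Or.inl Q.start_mem_support),
              Or.inr (Or.inl Q.end_mem_support), h, hxx', hxy ▸ hyy', h2⟩
        · refine ⟨x'', y', Or.inr (Or.inr R.start_mem_support),
            Or.inr (Or.inl Q.end_mem_support), ?_, hxx'', hxy ▸ hyy', h1⟩
          intro he
          exact hdQR Q.end_mem_support (he ▸ R.start_mem_support)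
      · -- x'' ≠ y''
        by_cases h1 : G.Adj x' y''
        · by_cases h2 : G.Adj x'' y''
          · exact (k4_of_adj hk4 hxx' hxx'' (hxy ▸ hyy'') hx'x'' h1 h2).elim
          · exact ⟨x'', y'', Or.inr (Or.inr R.start_mem_support),
              Or.inr (Or.inr R.end_mem_support), h, hxx'', hxy ▸ hyy'', h2⟩
        · refine ⟨x', y'', Or.inr (Or.inl Q.start_mem_support),
            Or.inr (Or.inr R.end_mem_support), ?_, hxx', hxy ▸ hyy'', h1⟩
          intro he
          exact hdQR Q.start_mem_support (he ▸ R.end_mem_support)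
    · -- u = x ≠ y : P is not nil
      obtain ⟨c, hxc, q, hPeq⟩ := Walk.not_nil_iff.mp (not_nil_of_ne' hxy (p := P))
      have hcP : c ∈ P.support := by
        rw [hPeq, Walk.support_cons]
        exact List.mem_cons_of_mem _ q.start_mem_support
      have hcx' : c ≠ x' := fun he => hdPQ hcP (he ▸ Q.start_mem_support)
      have hcx'' : c ≠ x'' := fun he => hdPR hcP (he ▸ R.start_mem_support)
      by_cases h1 : G.Adj x' c
      · by_cases h2 : G.Adj x'' c
        · exact (k4_of_adj hk4 hxx' hxx'' hxc hx'x'' h1 h2).elim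
        · exact ⟨x'', c, Or.inr (Or.inr R.start_mem_support), Or.inl hcP,
            fun he => hcx'' he.symm, hxx'', hxc, h2⟩
      · exact ⟨x', c, Or.inr (Or.inl Q.start_mem_support), Or.inl hcP,
          fun he => hcx' he.symm, hxx', hxc, h1⟩
  · -- interior
    set t := P.takeUntil u hu with ht
    set d := P.dropUntil u hu with hd
    have hdn : ¬ d.Nil := not_nil_of_ne' huy
    have htn : ¬ t.reverse.Nil := not_nil_of_ne' hux
    obtain ⟨b, hub, e, hdeq⟩ := Walk.not_nil_iff.mp hdn
    obtain ⟨a, hua, r, hteq⟩ := Walk.not_nil_iff.mp htn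
    have hat : a ∈ t.support := by
      have : a ∈ t.reverse.support := by
        rw [hteq, Walk.support_cons]
        exact List.mem_cons_of_mem _ r.start_mem_support
      rwa [Walk.support_reverse, List.mem_reverse] at this
    have hbd : b ∈ d.support.tail := by
      have h1 : d.support = u :: e.support := by rw [hdeq, Walk.support_cons]
      rw [h1]
      exact e.start_mem_support
    have haP : a ∈ P.support := P.support_takeUntil_subset hu hat
    have hbP : b ∈ P.support := P.support_dropUntil_subset hu (List.mem_of_mem_tail hbd)
    have hab : a ≠ b := by
      rintro rfl
      exact take_drop_disjoint P hP hu hat hbd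
    have heua : s(u, a) ∈ P.edges := by
      have h1 : s(u, a) ∈ t.reverse.edges := by
        rw [hteq, Walk.edges_cons]
        exact List.mem_cons_self
      rw [Walk.edges_reverse, List.mem_reverse] at h1
      exact P.edges_takeUntil_subset hu h1
    have heub : s(u, b) ∈ P.edges := by
      have h1 : s(u, b) ∈ d.edges := by
        rw [hdeq, Walk.edges_cons]
        exact List.mem_cons_self
      exact P.edges_dropUntil_subset hu h1
    refine ⟨a, b, Or.inl haP, Or.inl hbP, hab, hua, hub, ?_⟩
    intro hadj
    have h9 := hiff a b (Or.inl haP) (Or.inl hbP) hadj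
    have hau : a ≠ u := hua.ne'
    have hbu : b ≠ u := hub.ne'
    rcases h9 with h9 | h9 | h9 | h9 | h9 | h9 | h9 | h9 | h9
    · -- triangle in path edges
      have e1 : s(a, u) ∈ P.edges := by rwa [Sym2.eq_swap] at heua
      exact path_edges_no_triangle P hau hbu.symm hab hP e1 heub h9
    · exact hdPQ haP (Q.fst_mem_support_of_mem_edges h9)
    · exact hdPR haP (R.fst_mem_support_of_mem_edges h9)
    · rcases Sym2.eq_iff.mp h9 with ⟨_, hb⟩ | ⟨ha', _⟩
      · exact hdPQ hbP (hb ▸ Q.start_mem_support)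
      · exact hdPQ haP (ha' ▸ Q.start_mem_support)
    · rcases Sym2.eq_iff.mp h9 with ⟨_, hb⟩ | ⟨ha', _⟩
      · exact hdPR hbP (hb ▸ R.start_mem_support)
      · exact hdPR haP (ha' ▸ R.start_mem_support)
    · rcases Sym2.eq_iff.mp h9 with ⟨ha', _⟩ | ⟨ha', _⟩
      · exact hdPQ haP (ha' ▸ Q.start_mem_support)
      · exact hdPR haP (ha' ▸ R.start_mem_support)
    · rcases Sym2.eq_iff.mp h9 with ⟨_, hb⟩ | ⟨ha', _⟩
      · exact hdPQ hbP (hb ▸ Q.end_mem_support)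
      · exact hdPQ haP (ha' ▸ Q.end_mem_support)
    · rcases Sym2.eq_iff.mp h9 with ⟨_, hb⟩ | ⟨ha', _⟩
      · exact hdPR hbP (hb ▸ R.end_mem_support)
      · exact hdPR haP (ha' ▸ R.end_mem_support)
    · rcases Sym2.eq_iff.mp h9 with ⟨ha', _⟩ | ⟨ha', _⟩
      · exact hdPQ haP (ha' ▸ Q.end_mem_support)
      · exact hdPR haP (ha' ▸ R.end_mem_support)

end TN

lemma tn_any (hk4 : G.CliqueFree 4)
    {P : G.Walk x y} {Q : G.Walk x' y'} {R : G.Walk x'' y''}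
    (hP : P.IsPath)
    (hdPQ : P.support.Disjoint Q.support) (hdPR : P.support.Disjoint R.support)
    (hdQR : Q.support.Disjoint R.support)
    (hxx' : G.Adj x x') (hxx'' : G.Adj x x'') (hx'x'' : G.Adj x' x'')
    (hyy' : G.Adj y y') (hyy'' : G.Adj y y'') (hy'y'' : G.Adj y' y'')
    (hiff : ∀ a b : V,
      (a ∈ P.support ∨ a ∈ Q.support ∨ a ∈ R.support) →
      (b ∈ P.support ∨ b ∈ Q.support ∨ b ∈ R.support) →
      G.Adj a b →
      s(a,b) ∈ P.edges ∨ s(a,b) ∈ Q.edges ∨ s(a,b) ∈ R.edges ∨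
      s(a,b) = s(x,x') ∨ s(a,b) = s(x,x'') ∨ s(a,b) = s(x',x'') ∨
      s(a,b) = s(y,y') ∨ s(a,b) = s(y,y'') ∨ s(a,b) = s(y',y''))
    (hnn : x ≠ y ∨ x' ≠ y' ∨ x'' ≠ y'')
    (hu : u ∈ P.support) :
    ∃ a b : V, (a ∈ P.support ∨ a ∈ Q.support ∨ a ∈ R.support) ∧
      (b ∈ P.support ∨ b ∈ Q.support ∨ b ∈ R.support) ∧
      a ≠ b ∧ G.Adj u a ∧ G.Adj u b ∧ ¬ G.Adj a b := by
  have memrev : ∀ {c d : V} (W : G.Walk c d) (z : V),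
      z ∈ W.reverse.support ↔ z ∈ W.support := by
    intro c d W z
    rw [Walk.support_reverse, List.mem_reverse]
  have edgerev : ∀ {c d : V} (W : G.Walk c d) (e : Sym2 V),
      e ∈ W.reverse.edges ↔ e ∈ W.edges := by
    intro c d W e
    rw [Walk.edges_reverse, List.mem_reverse]
  by_cases huy : u = y
  · have hu' : u ∈ P.reverse.support := (memrev P u).mpr hu
    have hres := tn_core (G := G) hk4 (P := P.reverse) (Q := Q.reverse) (R := R.reverse)
      hP.reverse
      (fun z h1 h2 => hdPQ ((memrev P z).mp h1) ((memrev Q z).mp h2))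
      (fun z h1 h2 => hdPR ((memrev P z).mp h1) ((memrev R z).mp h2))
      (fun z h1 h2 => hdQR ((memrev Q z).mp h1) ((memrev R z).mp h2))
      hyy' hyy'' hy'y'' hxx' hxx'' hx'x''
      (fun a b h1 h2 hadj => by
        have h1' : a ∈ P.support ∨ a ∈ Q.support ∨ a ∈ R.support := by
          rcases h1 with h | h | h
          · exact Or.inl ((memrev P a).mp h)
          · exact Or.inr (Or.inl ((memrev Q a).mp h))
          · exact Or.inr (Or.inr ((memrev R a).mp h))
        have h2' : b ∈ P.support ∨ b ∈ Q.support ∨ b ∈ R.support := by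
          rcases h2 with h | h | h
          · exact Or.inl ((memrev P b).mp h)
          · exact Or.inr (Or.inl ((memrev Q b).mp h))
          · exact Or.inr (Or.inr ((memrev R b).mp h))
        have h9 := hiff a b h1' h2' hadj
        rcases h9 with h | h | h | h | h | h | h | h | h
        · exact Or.inl ((edgerev P _).mpr h)
        · exact Or.inr (Or.inl ((edgerev Q _).mpr h))
        · exact Or.inr (Or.inr (Or.inl ((edgerev R _).mpr h)))
        · exact Or.inr (Or.inr (Or.inr (Or.inr (Or.inr (Or.inr (Or.inl h))))))
        · exact Or.inr (Or.inr (Or.inr (Or.inr (Or.inr (Or.inr (Or.inr (Or.inl h)))))))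
        · exact Or.inr (Or.inr (Or.inr (Or.inr (Or.inr (Or.inr (Or.inr (Or.inr h)))))))
        · exact Or.inr (Or.inr (Or.inr (Or.inl h)))
        · exact Or.inr (Or.inr (Or.inr (Or.inr (Or.inl h))))
        · exact Or.inr (Or.inr (Or.inr (Or.inr (Or.inr (Or.inl h))))))
      (by
        rcases hnn with h | h | h
        · exact Or.inl h.symm
        · exact Or.inr (Or.inl h.symm)
        · exact Or.inr (Or.inr h.symm))
      hu' (Or.inl huy)
    obtain ⟨a, b, h1, h2, h3, h4, h5, h6⟩ := hres
    refine ⟨a, b, ?_, ?_, h3, h4, h5, h6⟩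
    · rcases h1 with h | h | h
      · exact Or.inl ((memrev P a).mp h)
      · exact Or.inr (Or.inl ((memrev Q a).mp h))
      · exact Or.inr (Or.inr ((memrev R a).mp h))
    · rcases h2 with h | h | h
      · exact Or.inl ((memrev P b).mp h)
      · exact Or.inr (Or.inl ((memrev Q b).mp h))
      · exact Or.inr (Or.inr ((memrev R b).mp h))
  · by_cases hux : u = x
    · exact tn_core hk4 hP hdPQ hdPR hdQR hxx' hxx'' hx'x'' hyy' hyy'' hy'y''
        hiff hnn hu (Or.inl hux)
    · exact tn_core hk4 hP hdPQ hdPR hdQR hxx' hxx'' hx'x'' hyy' hyy'' hy'y''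
        hiff hnn hu (Or.inr ⟨hux, huy⟩)


section Main

variable {A B : Set V} {u v : V}

lemma start_not_mem_tail {a c : V} (p : G.Walk a c) (hp : p.IsPath) : a ∉ p.support.tail := by
  have hnd := hp.support_nodup
  rw [p.support_eq_cons] at hnd
  exact (List.nodup_cons.mp hnd).1

lemma seg_core
    (hedges : ∀ e ∈ G.edgeSet, (∀ z ∈ e, z ∈ A) ∨ (∀ z ∈ e, z ∈ B))
    (hsep : A ∩ B = {u, v}) (hunion : A ∪ B = Set.univ)
    {x y x' y' x'' y'' : V}
    {P : G.Walk x y} {Q : G.Walk x' y'} {R : G.Walk x'' y''}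
    (hP : P.IsPath) (hQ : Q.IsPath) (hR : R.IsPath)
    (hdPQ : P.support.Disjoint Q.support) (hdPR : P.support.Disjoint R.support)
    (hxA : x ∈ A) (hyA : y ∈ A) (hx'A : x' ∈ A) (hy'A : y' ∈ A)
    (hx''A : x'' ∈ A) (hy''A : y'' ∈ A)
    {b₀ : V} (hb₀P : b₀ ∈ P.support) (hb₀A : b₀ ∉ A)
    (hu : u ∈ P.support)
    (hvd : v ∈ (P.dropUntil u hu).support)
    (hne : u ≠ v) :
    ∃ (c d : V) (W : G.Walk c d), W.IsPath ∧ W.support <:+: P.support ∧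
      {z | z ∈ P.support ∨ z ∈ Q.support ∨ z ∈ R.support} ∩ B = {z | z ∈ W.support} := by
  have huAB : u ∈ A ∩ B := by rw [hsep]; simp
  have hvAB : v ∈ A ∩ B := by rw [hsep]; simp
  have htP : (P.takeUntil u hu).IsPath := hP.takeUntil hu
  have hdP : (P.dropUntil u hu).IsPath := hP.dropUntil hu
  have hvdt : v ∈ (P.dropUntil u hu).support.tail := by
    have h1 := (P.dropUntil u hu).support_eq_cons
    rw [h1] at hvd
    rcases List.mem_cons.mp hvd with h | h
    · exact absurd h hne.symm
    · exact h
  set t := P.takeUntil u hu with ht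
  set d := P.dropUntil u hu with hd
  set W := d.takeUntil v hvd with hW
  set E := d.dropUntil v hvd with hE
  have hWP : W.IsPath := hdP.takeUntil hvd
  have hEP : E.IsPath := hdP.dropUntil hvd
  have hPs : P.support = t.support ++ d.support.tail := support_take_drop P hu
  have hds : d.support = W.support ++ E.support.tail := support_take_drop d hvd
  have hdt : d.support.tail = W.support.tail ++ E.support.tail := by
    have h1 : d.support = u :: d.support.tail := d.support_eq_cons
    have h2 : W.support = u :: W.support.tail := W.support_eq_cons
    rw [h1, h2, List.cons_append] at hds
    exact (List.cons.injEq _ _ _ _ ▸ hds).2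
  have m1 : v ∉ t.support := fun h => take_drop_disjoint P hP hu h hvdt
  have mu_dtail : u ∉ d.support.tail := start_not_mem_tail d hdP
  have mu_E : u ∉ E.support := by
    intro h
    have h1 := E.support_eq_cons
    rw [h1] at h
    rcases List.mem_cons.mp h with h | h
    · exact hne h
    · exact mu_dtail (hdt ▸ List.mem_append_right _ h)
  have mv_Etail : v ∉ E.support.tail := start_not_mem_tail E hEP
  -- everything on t is in A
  have NOTT1 : ∀ w, w ∈ t.support → w ∉ A → False := by
    intro w hwt hwA
    have hwu : w ≠ u := fun h => hwA (h ▸ huAB.1)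
    have hwv : w ≠ v := fun h => hwA (h ▸ hvAB.1)
    have hu_not : u ∉ (t.takeUntil w hwt).support := by
      intro hmem
      exact hwu (mem_take_mem_drop t htP hwt hmem (t.dropUntil w hwt).end_mem_support).symm
    have hv_not : v ∉ (t.takeUntil w hwt).support :=
      fun h => m1 (t.support_takeUntil_subset hwt h)
    refine conn_absurd hedges hsep (t.takeUntil w hwt).reverse hwA hxA ?_ ?_
    · rwa [Walk.support_reverse, List.mem_reverse]
    · rwa [Walk.support_reverse, List.mem_reverse]
  -- everything on E is in A
  have NOTT2 : ∀ w, w ∈ E.support → w ∉ A → False := by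
    intro w hwE hwA
    have hwv : w ≠ v := fun h => hwA (h ▸ hvAB.1)
    have hv_not : v ∉ (E.dropUntil w hwE).support := by
      intro hmem
      exact hwv (mem_take_mem_drop E hEP hwE (E.takeUntil w hwE).start_mem_support hmem).symm
    have hu_not : u ∉ (E.dropUntil w hwE).support :=
      fun h => mu_E (E.support_dropUntil_subset hwE h)
    exact conn_absurd hedges hsep (E.dropUntil w hwE) hwA hyA hu_not hv_not
  have hb₀u : b₀ ≠ u := fun h => hb₀A (h ▸ huAB.1)
  have hb₀v : b₀ ≠ v := fun h => hb₀A (h ▸ hvAB.1)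
  have hb₀W : b₀ ∈ W.support := by
    have h1 : b₀ ∈ t.support ++ d.support.tail := by rw [← hPs]; exact hb₀P
    rcases List.mem_append.mp h1 with h | h
    · exact absurd h (fun hh => NOTT1 b₀ hh hb₀A)
    · rw [hdt] at h
      rcases List.mem_append.mp h with h | h
      · exact List.mem_of_mem_tail h
      · exact absurd (List.mem_of_mem_tail h) (fun hh => NOTT2 b₀ hh hb₀A)
  -- interior of W is outside A
  have INB : ∀ w, w ∈ W.support → w ≠ u → w ≠ v → w ∉ A := by
    intro w hwW hwu hwv hwA
    have hWsplit : W.support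
        = (W.takeUntil b₀ hb₀W).support ++ (W.dropUntil b₀ hb₀W).support.tail :=
      support_take_drop W hb₀W
    have hwW' := hwW
    rw [hWsplit] at hwW'
    rcases List.mem_append.mp hwW' with hw1 | hw2
    · -- w on the piece from u to b₀
      have hTbP : (W.takeUntil b₀ hb₀W).IsPath := hWP.takeUntil hb₀W
      have hu_not : u ∉ ((W.takeUntil b₀ hb₀W).dropUntil w hw1).support := by
        intro hmem
        exact hwu (mem_take_mem_drop (W.takeUntil b₀ hb₀W) hTbP hw1
          ((W.takeUntil b₀ hb₀W).takeUntil w hw1).start_mem_support hmem).symm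
      have hv_not : v ∉ ((W.takeUntil b₀ hb₀W).dropUntil w hw1).support := by
        intro hmem
        have h1 : v ∈ (W.takeUntil b₀ hb₀W).support :=
          (W.takeUntil b₀ hb₀W).support_dropUntil_subset hw1 hmem
        exact hb₀v (mem_take_mem_drop W hWP hb₀W h1
          (W.dropUntil b₀ hb₀W).end_mem_support).symm
      refine conn_absurd hedges hsep ((W.takeUntil b₀ hb₀W).dropUntil w hw1).reverse
        hb₀A hwA ?_ ?_
      · rwa [Walk.support_reverse, List.mem_reverse]
      · rwa [Walk.support_reverse, List.mem_reverse]
    · -- w on the piece from b₀ to v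
      have hw2' : w ∈ (W.dropUntil b₀ hb₀W).support := List.mem_of_mem_tail hw2
      have hD2P : (W.dropUntil b₀ hb₀W).IsPath := hWP.dropUntil hb₀W
      have hu_not : u ∉ ((W.dropUntil b₀ hb₀W).takeUntil w hw2').support := by
        intro hmem
        have h1 : u ∈ (W.dropUntil b₀ hb₀W).support :=
          (W.dropUntil b₀ hb₀W).support_takeUntil_subset hw2' hmem
        exact hb₀u (mem_take_mem_drop W hWP hb₀W
          (W.takeUntil b₀ hb₀W).start_mem_support h1).symm
      have hv_not : v ∉ ((W.dropUntil b₀ hb₀W).takeUntil w hw2').support := by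
        intro hmem
        exact hwv (mem_take_mem_drop (W.dropUntil b₀ hb₀W) hD2P hw2' hmem
          ((W.dropUntil b₀ hb₀W).dropUntil w hw2').end_mem_support).symm
      exact conn_absurd hedges hsep ((W.dropUntil b₀ hb₀W).takeUntil w hw2')
        hb₀A hwA hu_not hv_not
  refine ⟨u, v, W, hWP, ?_, ?_⟩
  · refine ⟨t.support.dropLast, E.support.tail, ?_⟩
    have h2 : W.support = u :: W.support.tail := W.support_eq_cons
    calc t.support.dropLast ++ W.support ++ E.support.tail
        = t.support.dropLast ++ (u :: W.support.tail) ++ E.support.tail := by rw [← h2]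
      _ = (t.support.dropLast ++ [u]) ++ (W.support.tail ++ E.support.tail) := by
          simp only [List.append_assoc, List.cons_append, List.singleton_append, List.nil_append]
      _ = t.support ++ d.support.tail := by rw [← support_concat t, ← hdt]
      _ = P.support := (support_take_drop P hu).symm
  · ext z
    simp only [Set.mem_inter_iff, Set.mem_setOf_eq]
    constructor
    · rintro ⟨hzS, hzB⟩
      by_cases hzA : z ∈ A
      · have hz2 : z ∈ ({u, v} : Set V) := by rw [← hsep]; exact ⟨hzA, hzB⟩
        rcases hz2 with rfl | rfl
        · exact W.start_mem_support
        · exact W.end_mem_support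
      · rcases hzS with hz | hz | hz
        · rw [hPs] at hz
          rcases List.mem_append.mp hz with h | h
          · exact absurd h (fun hh => NOTT1 z hh hzA)
          · rw [hdt] at h
            rcases List.mem_append.mp h with h | h
            · exact List.mem_of_mem_tail h
            · exact absurd (List.mem_of_mem_tail h)
                (fun hh => NOTT2 z hh hzA)
        · exact absurd ((both_cut_on_path hedges hsep Q hQ hx'A hy'A hz hzA).1)
            (fun hQu => hdPQ hu hQu)
        · exact absurd ((both_cut_on_path hedges hsep R hR hx''A hy''A hz hzA).1)
            (fun hRu => hdPR hu hRu)
    · intro hzW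
      have hzP : z ∈ P.support := by
        have h1 : z ∈ d.support := d.support_takeUntil_subset hvd hzW
        exact P.support_dropUntil_subset hu h1
      refine ⟨Or.inl hzP, ?_⟩
      by_cases hzu : z = u
      · exact hzu ▸ huAB.2
      · by_cases hzv : z = v
        · exact hzv ▸ hvAB.2
        · have hzA : z ∉ A := INB z hzW hzu hzv
          have : z ∈ A ∪ B := by rw [hunion]; trivial
          rcases this with h | h
          · exact absurd h hzA
          · exact h


lemma seg_main
    (hedges : ∀ e ∈ G.edgeSet, (∀ z ∈ e, z ∈ A) ∨ (∀ z ∈ e, z ∈ B))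
    (hsep : A ∩ B = {u, v}) (hunion : A ∪ B = Set.univ)
    {x y x' y' x'' y'' : V}
    {P : G.Walk x y} {Q : G.Walk x' y'} {R : G.Walk x'' y''}
    (hP : P.IsPath) (hQ : Q.IsPath) (hR : R.IsPath)
    (hdPQ : P.support.Disjoint Q.support) (hdPR : P.support.Disjoint R.support)
    (hxA : x ∈ A) (hyA : y ∈ A) (hx'A : x' ∈ A) (hy'A : y' ∈ A)
    (hx''A : x'' ∈ A) (hy''A : y'' ∈ A)
    {b₀ : V} (hb₀P : b₀ ∈ P.support) (hb₀A : b₀ ∉ A)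
    (hne : u ≠ v) :
    ∃ (c d : V) (W : G.Walk c d), W.IsPath ∧ W.support <:+: P.support ∧
      {z | z ∈ P.support ∨ z ∈ Q.support ∨ z ∈ R.support} ∩ B = {z | z ∈ W.support} := by
  obtain ⟨hu, hv⟩ := both_cut_on_path hedges hsep P hP hxA hyA hb₀P hb₀A
  have hsplit : v ∈ (P.takeUntil u hu).support ++ (P.dropUntil u hu).support.tail := by
    rw [← support_take_drop P hu]; exact hv
  rcases List.mem_append.mp hsplit with hvt | hvd
  · -- v comes before u
    have hunt : u ∉ (P.takeUntil v hv).support := ord_lemma P hP hu hv hne hvt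
    have hud : u ∈ (P.dropUntil v hv).support := by
      have h1 : u ∈ (P.takeUntil v hv).support ++ (P.dropUntil v hv).support.tail := by
        rw [← support_take_drop P hv]; exact hu
      rcases List.mem_append.mp h1 with h | h
      · exact absurd h hunt
      · exact List.mem_of_mem_tail h
    have hsep' : A ∩ B = {v, u} := by rw [hsep, Set.pair_comm]
    exact seg_core hedges hsep' hunion hP hQ hR hdPQ hdPR hxA hyA hx'A hy'A hx''A hy''A
      hb₀P hb₀A hv hud hne.symm
  · exact seg_core hedges hsep hunion hP hQ hR hdPQ hdPR hxA hyA hx'A hy'A hx''A hy''A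
      hb₀P hb₀A hu (List.mem_of_mem_tail hvd) hne

lemma tn_prism (hk4 : G.CliqueFree 4)
    {x₁ x₂ x₃ y₁ y₂ y₃ : V}
    {P₁ : G.Walk x₁ y₁} {P₂ : G.Walk x₂ y₂} {P₃ : G.Walk x₃ y₃}
    (hP1 : P₁.IsPath) (hP2 : P₂.IsPath) (hP3 : P₃.IsPath)
    (hd12 : P₁.support.Disjoint P₂.support) (hd13 : P₁.support.Disjoint P₃.support)
    (hd23 : P₂.support.Disjoint P₃.support)
    (hx12 : G.Adj x₁ x₂) (hx13 : G.Adj x₁ x₃) (hx23 : G.Adj x₂ x₃)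
    (hy12 : G.Adj y₁ y₂) (hy13 : G.Adj y₁ y₃) (hy23 : G.Adj y₂ y₃)
    (hiff : ∀ a b : V,
      (a ∈ P₁.support ∨ a ∈ P₂.support ∨ a ∈ P₃.support) →
      (b ∈ P₁.support ∨ b ∈ P₂.support ∨ b ∈ P₃.support) →
      G.Adj a b →
      s(a,b) ∈ P₁.edges ∨ s(a,b) ∈ P₂.edges ∨ s(a,b) ∈ P₃.edges ∨
      s(a,b) = s(x₁,x₂) ∨ s(a,b) = s(x₁,x₃) ∨ s(a,b) = s(x₂,x₃) ∨
      s(a,b) = s(y₁,y₂) ∨ s(a,b) = s(y₁,y₃) ∨ s(a,b) = s(y₂,y₃))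
    (hne3 : x₃ ≠ y₃) {u : V}
    (hu : u ∈ P₁.support ∨ u ∈ P₂.support ∨ u ∈ P₃.support) :
    ∃ a b : V, (a ∈ P₁.support ∨ a ∈ P₂.support ∨ a ∈ P₃.support) ∧
      (b ∈ P₁.support ∨ b ∈ P₂.support ∨ b ∈ P₃.support) ∧
      a ≠ b ∧ G.Adj u a ∧ G.Adj u b ∧ ¬ G.Adj a b := by
  rcases hu with hu | hu | hu
  · obtain ⟨a, b, ha, hb, hab, h1, h2, h3⟩ := tn_any hk4 hP1 hd12 hd13 hd23
      hx12 hx13 hx23 hy12 hy13 hy23 hiff (Or.inr (Or.inr hne3)) hu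
    exact ⟨a, b, ha, hb, hab, h1, h2, h3⟩
  · obtain ⟨a, b, ha, hb, hab, h1, h2, h3⟩ := tn_any hk4 hP2
      (fun z hz1 hz2 => hd12 hz2 hz1) hd23 hd13
      hx12.symm hx23 hx13 hy12.symm hy23 hy13
      (fun a b ha hb hadj => by
        have ha' : a ∈ P₁.support ∨ a ∈ P₂.support ∨ a ∈ P₃.support := by tauto
        have hb' : b ∈ P₁.support ∨ b ∈ P₂.support ∨ b ∈ P₃.support := by tauto
        have h := hiff a b ha' hb' hadj
        rcases h with h | h | h | h | h | h | h | h | h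
        · exact Or.inr (Or.inl h)
        · exact Or.inl h
        · exact Or.inr (Or.inr (Or.inl h))
        · exact Or.inr (Or.inr (Or.inr (Or.inl (h.trans Sym2.eq_swap))))
        · exact Or.inr (Or.inr (Or.inr (Or.inr (Or.inr (Or.inl h)))))
        · exact Or.inr (Or.inr (Or.inr (Or.inr (Or.inl h))))
        · exact Or.inr (Or.inr (Or.inr (Or.inr (Or.inr (Or.inr
            (Or.inl (h.trans Sym2.eq_swap)))))))
        · exact Or.inr (Or.inr (Or.inr (Or.inr (Or.inr (Or.inr (Or.inr (Or.inr h)))))))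
        · exact Or.inr (Or.inr (Or.inr (Or.inr (Or.inr (Or.inr (Or.inr (Or.inl h))))))))
      (Or.inr (Or.inr hne3)) hu
    exact ⟨a, b, by tauto, by tauto, hab, h1, h2, h3⟩
  · obtain ⟨a, b, ha, hb, hab, h1, h2, h3⟩ := tn_any hk4 hP3
      (fun z hz1 hz2 => hd13 hz2 hz1) (fun z hz1 hz2 => hd23 hz2 hz1) hd12
      hx13.symm hx23.symm hx12 hy13.symm hy23.symm hy12
      (fun a b ha hb hadj => by
        have ha' : a ∈ P₁.support ∨ a ∈ P₂.support ∨ a ∈ P₃.support := by tauto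
        have hb' : b ∈ P₁.support ∨ b ∈ P₂.support ∨ b ∈ P₃.support := by tauto
        have h := hiff a b ha' hb' hadj
        rcases h with h | h | h | h | h | h | h | h | h
        · exact Or.inr (Or.inl h)
        · exact Or.inr (Or.inr (Or.inl h))
        · exact Or.inl h
        · exact Or.inr (Or.inr (Or.inr (Or.inr (Or.inr (Or.inl h)))))
        · exact Or.inr (Or.inr (Or.inr (Or.inl (h.trans Sym2.eq_swap))))
        · exact Or.inr (Or.inr (Or.inr (Or.inr (Or.inl (h.trans Sym2.eq_swap)))))
        · exact Or.inr (Or.inr (Or.inr (Or.inr (Or.inr (Or.inr (Or.inr (Or.inr h)))))))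
        · exact Or.inr (Or.inr (Or.inr (Or.inr (Or.inr (Or.inr
            (Or.inl (h.trans Sym2.eq_swap)))))))
        · exact Or.inr (Or.inr (Or.inr (Or.inr (Or.inr (Or.inr (Or.inr
            (Or.inl (h.trans Sym2.eq_swap)))))))))
      (Or.inl hne3) hu
    exact ⟨a, b, by tauto, by tauto, hab, h1, h2, h3⟩


lemma main_lemma
    (hconn : ∀ w : V, ((⊤ : G.Subgraph).deleteVerts {w}).coe.Connected)
    (hclaw : ∀ w a b c : V, G.Adj w a → G.Adj w b → G.Adj w c → a ≠ b → a ≠ c → b ≠ c →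
      ¬G.Adj a b → ¬G.Adj a c → ¬G.Adj b c → False)
    (hk4 : G.CliqueFree 4)
    (hunion : A ∪ B = Set.univ)
    (hedges : ∀ e ∈ G.edgeSet, (∀ z ∈ e, z ∈ A) ∨ (∀ z ∈ e, z ∈ B))
    (hsep : A ∩ B = {u, v}) (huvne : u ≠ v) (hnadj : ¬ G.Adj u v)
    (hAne : ∃ z, z ∉ A)
    {x₁ x₂ x₃ y₁ y₂ y₃ : V}
    {P₁ : G.Walk x₁ y₁} {P₂ : G.Walk x₂ y₂} {P₃ : G.Walk x₃ y₃}
    (hP1 : P₁.IsPath) (hP2 : P₂.IsPath) (hP3 : P₃.IsPath) (ho3 : Odd P₃.length)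
    (hd12 : P₁.support.Disjoint P₂.support) (hd13 : P₁.support.Disjoint P₃.support)
    (hd23 : P₂.support.Disjoint P₃.support)
    (hx12 : G.Adj x₁ x₂) (hx13 : G.Adj x₁ x₃) (hx23 : G.Adj x₂ x₃)
    (hy12 : G.Adj y₁ y₂) (hy13 : G.Adj y₁ y₃) (hy23 : G.Adj y₂ y₃)
    (hiff : ∀ a b : V,
      (a ∈ P₁.support ∨ a ∈ P₂.support ∨ a ∈ P₃.support) →
      (b ∈ P₁.support ∨ b ∈ P₂.support ∨ b ∈ P₃.support) →
      G.Adj a b →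
      s(a,b) ∈ P₁.edges ∨ s(a,b) ∈ P₂.edges ∨ s(a,b) ∈ P₃.edges ∨
      s(a,b) = s(x₁,x₂) ∨ s(a,b) = s(x₁,x₃) ∨ s(a,b) = s(x₂,x₃) ∨
      s(a,b) = s(y₁,y₂) ∨ s(a,b) = s(y₁,y₃) ∨ s(a,b) = s(y₂,y₃))
    (ht1 : x₁ ∈ A) (ht2 : x₂ ∈ A) (ht3 : x₃ ∈ A)
    (ht4 : y₁ ∈ A) (ht5 : y₂ ∈ A) (ht6 : y₃ ∈ A) :
    ({z | z ∈ P₁.support ∨ z ∈ P₂.support ∨ z ∈ P₃.support} ∩ B = ∅) ∨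
    ∃ (c d : V) (W : G.Walk c d), W.IsPath ∧
      (W.support <:+: P₁.support ∨ W.support <:+: P₂.support ∨
        W.support <:+: P₃.support) ∧
      {z | z ∈ P₁.support ∨ z ∈ P₂.support ∨ z ∈ P₃.support} ∩ B
        = {z | z ∈ W.support} := by
  have hne3 : x₃ ≠ y₃ := by
    intro h
    subst h
    have hnil := loop_isPath_eq_nil P₃ hP3
    rw [hnil] at ho3
    simp [Nat.odd_iff] at ho3
  have huAB : u ∈ A ∩ B := by rw [hsep]; simp
  have hvAB : v ∈ A ∩ B := by rw [hsep]; simp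
  by_cases hT : ∃ z, (z ∈ P₁.support ∨ z ∈ P₂.support ∨ z ∈ P₃.support) ∧ z ∉ A
  · obtain ⟨b₀, hb₀S, hb₀A⟩ := hT
    right
    rcases hb₀S with hb | hb | hb
    · obtain ⟨c, dd, W, h1, h2, h3⟩ := seg_main hedges hsep hunion hP1 hP2 hP3
        hd12 hd13 ht1 ht4 ht2 ht5 ht3 ht6 hb hb₀A huvne
      exact ⟨c, dd, W, h1, Or.inl h2, h3⟩
    · obtain ⟨c, dd, W, h1, h2, h3⟩ := seg_main hedges hsep hunion hP2 hP1 hP3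
        (fun z hz1 hz2 => hd12 hz2 hz1) hd23 ht2 ht5 ht1 ht4 ht3 ht6 hb hb₀A huvne
      refine ⟨c, dd, W, h1, Or.inr (Or.inl h2), ?_⟩
      rw [← h3]
      congr 1
      ext z
      simp only [Set.mem_setOf_eq]
      tauto
    · obtain ⟨c, dd, W, h1, h2, h3⟩ := seg_main hedges hsep hunion hP3 hP1 hP2
        (fun z hz1 hz2 => hd13 hz2 hz1) (fun z hz1 hz2 => hd23 hz2 hz1)
        ht3 ht6 ht1 ht4 ht2 ht5 hb hb₀A huvne
      refine ⟨c, dd, W, h1, Or.inr (Or.inr h2), ?_⟩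
      rw [← h3]
      congr 1
      ext z
      simp only [Set.mem_setOf_eq]
      tauto
  · push_neg at hT
    by_cases huS : u ∈ P₁.support ∨ u ∈ P₂.support ∨ u ∈ P₃.support
    · by_cases hvS : v ∈ P₁.support ∨ v ∈ P₂.support ∨ v ∈ P₃.support
      · -- claw contradiction
        exfalso
        obtain ⟨z, hzA⟩ := hAne
        have hzv : z ≠ v := fun h => hzA (h ▸ hvAB.1)
        have hzH : z ∈ ((⊤ : G.Subgraph).deleteVerts {v}).verts := by
          simp only [Subgraph.deleteVerts_verts, Subgraph.verts_top]
          exact ⟨trivial, hzv⟩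
        have huH : u ∈ ((⊤ : G.Subgraph).deleteVerts {v}).verts := by
          simp only [Subgraph.deleteVerts_verts, Subgraph.verts_top]
          exact ⟨trivial, huvne⟩
        obtain ⟨pw⟩ := (hconn v).preconnected ⟨z, hzH⟩ ⟨u, huH⟩
        have hvp : v ∉ (pw.map ((⊤ : G.Subgraph).deleteVerts {v}).hom).support := by
          intro hmem
          rw [Walk.support_map] at hmem
          obtain ⟨s, hs, hsv⟩ := List.mem_map.mp hmem
          exact s.2.2 (by simp only [Set.mem_singleton_iff]; exact hsv)
        obtain ⟨w₀, w', hadj, hw₀A, hw's, hw'uv⟩ :=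
          cross hedges hsep (pw.map ((⊤ : G.Subgraph).deleteVerts {v}).hom) hzA huAB.1
        have hw'u : w' = u := by
          rcases hw'uv with h | h
          · exact h
          · exact absurd (h ▸ hw's) hvp
        rw [hw'u] at hadj
        obtain ⟨a, b, haS, hbS, hab, hua, hub, hnab⟩ := tn_prism hk4 hP1 hP2 hP3
          hd12 hd13 hd23 hx12 hx13 hx23 hy12 hy13 hy23 hiff hne3 huS
        have hnwa : ∀ c : V, (c ∈ P₁.support ∨ c ∈ P₂.support ∨ c ∈ P₃.support) →
            G.Adj u c → ¬ G.Adj c w₀ := by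
          intro c hcS huc hadj2
          rcases hedges s(c, w₀) hadj2 with h | h
          · exact hw₀A (h w₀ (Sym2.mem_mk_right _ _))
          · have hcB : c ∈ B := h c (Sym2.mem_mk_left _ _)
            have hcA : c ∈ A := hT c hcS
            have hcuv : c ∈ ({u, v} : Set V) := by rw [← hsep]; exact ⟨hcA, hcB⟩
            rcases hcuv with rfl | rfl
            · exact huc.ne rfl
            · exact hnadj huc
        have haw : a ≠ w₀ := fun h => hw₀A (h ▸ hT a haS)
        have hbw : b ≠ w₀ := fun h => hw₀A (h ▸ hT b hbS)
        exact hclaw u a b w₀ hua hub hadj.symm hab haw hbw hnab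
          (hnwa a haS hua) (hnwa b hbS hub)
      · -- S ∩ B = {u}
        right
        refine ⟨u, u, Walk.nil, Walk.IsPath.nil, ?_, ?_⟩
        · rcases huS with h | h | h
          · left
            obtain ⟨s1, t1, hst⟩ := List.mem_iff_append.mp h
            exact ⟨s1, t1, by rw [Walk.support_nil, hst]; simp⟩
          · right; left
            obtain ⟨s1, t1, hst⟩ := List.mem_iff_append.mp h
            exact ⟨s1, t1, by rw [Walk.support_nil, hst]; simp⟩
          · right; right
            obtain ⟨s1, t1, hst⟩ := List.mem_iff_append.mp h
            exact ⟨s1, t1, by rw [Walk.support_nil, hst]; simp⟩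
        · ext w
          simp only [Set.mem_inter_iff, Set.mem_setOf_eq, Walk.support_nil,
            List.mem_singleton]
          constructor
          · rintro ⟨hwS, hwB⟩
            have hwA : w ∈ A := hT w hwS
            have hwuv : w ∈ ({u, v} : Set V) := by rw [← hsep]; exact ⟨hwA, hwB⟩
            rcases hwuv with rfl | rfl
            · rfl
            · exact absurd hwS hvS
          · rintro rfl
            exact ⟨huS, huAB.2⟩
    · by_cases hvS : v ∈ P₁.support ∨ v ∈ P₂.support ∨ v ∈ P₃.support
      · -- S ∩ B = {v}
        right
        refine ⟨v, v, Walk.nil, Walk.IsPath.nil, ?_, ?_⟩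
        · rcases hvS with h | h | h
          · left
            obtain ⟨s1, t1, hst⟩ := List.mem_iff_append.mp h
            exact ⟨s1, t1, by rw [Walk.support_nil, hst]; simp⟩
          · right; left
            obtain ⟨s1, t1, hst⟩ := List.mem_iff_append.mp h
            exact ⟨s1, t1, by rw [Walk.support_nil, hst]; simp⟩
          · right; right
            obtain ⟨s1, t1, hst⟩ := List.mem_iff_append.mp h
            exact ⟨s1, t1, by rw [Walk.support_nil, hst]; simp⟩
        · ext w
          simp only [Set.mem_inter_iff, Set.mem_setOf_eq, Walk.support_nil,
            List.mem_singleton]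
          constructor
          · rintro ⟨hwS, hwB⟩
            have hwA : w ∈ A := hT w hwS
            have hwuv : w ∈ ({u, v} : Set V) := by rw [← hsep]; exact ⟨hwA, hwB⟩
            rcases hwuv with rfl | rfl
            · exact absurd hwS huS
            · rfl
          · rintro rfl
            exact ⟨hvS, hvAB.2⟩
      · left
        ext w
        simp only [Set.mem_inter_iff, Set.mem_setOf_eq, Set.mem_empty_iff_false,
          iff_false, not_and]
        intro hwS hwB
        have hwA : w ∈ A := hT w hwS
        have hwuv : w ∈ ({u, v} : Set V) := by rw [← hsep]; exact ⟨hwA, hwB⟩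
        rcases hwuv with rfl | rfl
        · exact huS hwS
        · exact hvS hwS

end Main

end Stmt16Aux








variable {V : Type u}

/-- A graph is subcubic if every vertex has degree (number of neighbours) at most 3. -/
def Subcubic (G : SimpleGraph V) : Prop := ∀ v : V, (G.neighborSet v).ncard ≤ 3

/-- Two walks are edge-disjoint if they share no edge. -/
def WalkEdgeDisjoint {G : SimpleGraph V} {a b c d : V}
    (p : G.Walk a b) (q : G.Walk c d) : Prop :=
  ∀ e, e ∈ p.edges → e ∉ q.edges

/-- A skewed theta: two branch vertices joined by three pairwise edge-disjoint paths,
two of odd length and one of even length. -/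
def HasSkewedTheta (G : SimpleGraph V) : Prop :=
  ∃ (a b : V) (p₁ p₂ p₃ : G.Walk a b),
    p₁.IsPath ∧ p₂.IsPath ∧ p₃.IsPath ∧
    WalkEdgeDisjoint p₁ p₂ ∧ WalkEdgeDisjoint p₁ p₃ ∧ WalkEdgeDisjoint p₂ p₃ ∧
    Odd p₁.length ∧ Odd p₂.length ∧ Even p₃.length

/-- A graph is 2-connected: at least 3 vertices and deleting any vertex leaves it connected. -/
def TwoConnected (G : SimpleGraph V) : Prop :=
  3 ≤ Nat.card V ∧ ∀ v : V, ((⊤ : G.Subgraph).deleteVerts {v}).coe.Connected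

/-- Given a bipartition with first class `A`, an edge is `P`-odd if both of its
endvertices lie in the same class. -/
def POdd (A : Set V) (e : Sym2 V) : Prop :=
  (∀ x ∈ e, x ∈ A) ∨ (∀ x ∈ e, x ∉ A)

/-- A stable (independent) set of vertices. -/
def StableSet (G : SimpleGraph V) (s : Set V) : Prop :=
  s.Pairwise fun a b => ¬ G.Adj a b

/-- `u` is the centre of an induced claw. -/
def HasInducedClawAt (G : SimpleGraph V) (u : V) : Prop :=
  ∃ a b c : V, G.Adj u a ∧ G.Adj u b ∧ G.Adj u c ∧
    a ≠ b ∧ a ≠ c ∧ b ≠ c ∧ ¬ G.Adj a b ∧ ¬ G.Adj a c ∧ ¬ G.Adj b c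

/-- A graph is claw-free if it has no induced claw. -/
def ClawFree (G : SimpleGraph V) : Prop := ∀ u : V, ¬ HasInducedClawAt G u

/-- The t-contraction of `G` at a vertex `v`: the neighbours of `v` are removed,
and `v` becomes adjacent to all former second neighbours. -/
def tContract (G : SimpleGraph V) (v : V) :
    SimpleGraph {w : V // w ∉ G.neighborSet v} :=
  SimpleGraph.fromRel (fun a b =>
    G.Adj a b ∨ ((a : V) = v ∧ ∃ n : V, G.Adj v n ∧ G.Adj n (b : V)))

/-- One step in the formation of a t-minor: delete a vertex, or perform a
t-contraction at a vertex whose neighbourhood is stable. -/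
def TStep {W W' : Type u} (G : SimpleGraph W) (H : SimpleGraph W') : Prop :=
  (∃ v : W, Nonempty (H ≃g (G.induce {w : W | w ≠ v}))) ∨
  (∃ v : W, StableSet G (G.neighborSet v) ∧ Nonempty (H ≃g tContract G v))

/-- `H` is a t-minor of `G` if it is obtained by a series of vertex deletions
and t-contractions. -/
def IsTMinor {W W' : Type u} (G : SimpleGraph W) (H : SimpleGraph W') : Prop :=
  Relation.ReflTransGen (fun a b : (Σ U : Type u, SimpleGraph U) => TStep a.2 b.2)
    ⟨W, G⟩ ⟨W', H⟩

/-- The stable set polytope of `G`: the convex hull of characteristic vectors of stable sets. -/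
noncomputable def stableSetPolytope (G : SimpleGraph V) : Set (V → ℝ) :=
  convexHull ℝ {x : V → ℝ | ∃ s : Set V, StableSet G s ∧ x = s.indicator 1}

/-- The polytope given by non-negativity, edge and odd-cycle inequalities. -/
def TSTAB (G : SimpleGraph V) [Fintype V] : Set (V → ℝ) :=
  {x : V → ℝ |
    (∀ v : V, 0 ≤ x v ∧ x v ≤ 1) ∧
    (∀ u v : V, G.Adj u v → x u + x v ≤ 1) ∧
    (∀ (v : V) (c : G.Walk v v), c.IsCycle → Odd c.length →
      ∑ u ∈ c.support.toFinset, x u ≤ ((c.length / 2 : ℕ) : ℝ))}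

/-- A graph is t-perfect if its stable set polytope coincides with `TSTAB`. -/
def TPerfect (G : SimpleGraph V) [Fintype V] : Prop :=
  stableSetPolytope G = TSTAB G

/-- The complete graph on four vertices. -/
def K4 : SimpleGraph (Fin 4) := ⊤

/-- The 5-wheel: a 5-cycle (on `0,…,4`) plus a hub (`5`) adjacent to all cycle vertices. -/
def W5 : SimpleGraph (Fin 6) :=
  SimpleGraph.fromRel (fun i j =>
    (j : ℕ) = 5 ∨ ((i : ℕ) < 5 ∧ (j : ℕ) < 5 ∧ (j : ℕ) = ((i : ℕ) + 1) % 5))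

/-- The 5-cycle. -/
def C5 : SimpleGraph (Fin 5) :=
  SimpleGraph.fromRel (fun i j => (j : ℕ) = ((i : ℕ) + 1) % 5)

/-- An induced path of `G` all of whose vertices lie in `S`. -/
def IsInducedPathIn (G : SimpleGraph V) (S : Set V) {a b : V} (p : G.Walk a b) : Prop :=
  p.IsPath ∧ (∀ x ∈ p.support, x ∈ S) ∧
    ∀ x y : V, x ∈ p.support → y ∈ p.support → G.Adj x y → s(x, y) ∈ p.edges

/-- The data of a skewed prism: two triangles `x₁x₂x₃`, `y₁y₂y₃` joined by three
vertex-disjoint induced paths `P₁,P₂,P₃`, where `P₁,P₂` are even and `P₃` is odd, and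
the triangle edges are the only edges between the paths. -/
def IsSkewedPrism (G : SimpleGraph V) (x₁ x₂ x₃ y₁ y₂ y₃ : V)
    (P₁ : G.Walk x₁ y₁) (P₂ : G.Walk x₂ y₂) (P₃ : G.Walk x₃ y₃) : Prop :=
  P₁.IsPath ∧ P₂.IsPath ∧ P₃.IsPath ∧
  Even P₁.length ∧ Even P₂.length ∧ Odd P₃.length ∧
  P₁.support.Disjoint P₂.support ∧ P₁.support.Disjoint P₃.support ∧
  P₂.support.Disjoint P₃.support ∧
  G.Adj x₁ x₂ ∧ G.Adj x₁ x₃ ∧ G.Adj x₂ x₃ ∧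
  G.Adj y₁ y₂ ∧ G.Adj y₁ y₃ ∧ G.Adj y₂ y₃ ∧
  (∀ u w : V, u ∈ P₁.support ++ P₂.support ++ P₃.support →
    w ∈ P₁.support ++ P₂.support ++ P₃.support →
    (G.Adj u w ↔ (s(u, w) ∈ P₁.edges ∨ s(u, w) ∈ P₂.edges ∨ s(u, w) ∈ P₃.edges ∨
      s(u, w) ∈ [s(x₁, x₂), s(x₁, x₃), s(x₂, x₃), s(y₁, y₂), s(y₁, y₃), s(y₂, y₃)])))

/-- `G` contains a skewed prism as an induced subgraph. -/
def HasSkewedPrism (G : SimpleGraph V) : Prop :=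
  ∃ (x₁ x₂ x₃ y₁ y₂ y₃ : V) (P₁ : G.Walk x₁ y₁) (P₂ : G.Walk x₂ y₂) (P₃ : G.Walk x₃ y₃),
    IsSkewedPrism G x₁ x₂ x₃ y₁ y₂ y₃ P₁ P₂ P₃

/-- A `u`–`v`-linked obstruction with all vertices inside `S`: four vertex-disjoint
induced paths `R = u…r`, `S' = v…s`, `X = x₁…x₂`, `Y = y₁…y₂` with triangles
`r,x₁,y₁` and `s,x₂,y₂`, the triangle edges being the only edges between the paths,
and `X` of even length. -/
def IsLinkedObstructionIn (G : SimpleGraph V) (S : Set V) (u v : V) : Prop :=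
  ∃ (r s x₁ x₂ y₁ y₂ : V) (R : G.Walk u r) (S' : G.Walk v s)
    (X : G.Walk x₁ x₂) (Y : G.Walk y₁ y₂),
    R.IsPath ∧ S'.IsPath ∧ X.IsPath ∧ Y.IsPath ∧ Even X.length ∧
    (∀ w ∈ R.support, w ∈ S) ∧ (∀ w ∈ S'.support, w ∈ S) ∧
    (∀ w ∈ X.support, w ∈ S) ∧ (∀ w ∈ Y.support, w ∈ S) ∧
    R.support.Disjoint S'.support ∧ R.support.Disjoint X.support ∧
    R.support.Disjoint Y.support ∧ S'.support.Disjoint X.support ∧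
    S'.support.Disjoint Y.support ∧ X.support.Disjoint Y.support ∧
    G.Adj r x₁ ∧ G.Adj r y₁ ∧ G.Adj x₁ y₁ ∧
    G.Adj s x₂ ∧ G.Adj s y₂ ∧ G.Adj x₂ y₂ ∧
    (∀ a b : V, a ∈ R.support ++ S'.support ++ X.support ++ Y.support →
      b ∈ R.support ++ S'.support ++ X.support ++ Y.support →
      (G.Adj a b ↔ (s(a, b) ∈ R.edges ∨ s(a, b) ∈ S'.edges ∨ s(a, b) ∈ X.edges ∨
        s(a, b) ∈ Y.edges ∨
        s(a, b) ∈ [s(r, x₁), s(r, y₁), s(x₁, y₁), s(s, x₂), s(s, y₂), s(x₂, y₂)])))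


set_option maxHeartbeats 1600000 in
/-- let `G` be 2-connected, claw-free, `K₄`-free with maximum degree at
most 4, `H` a skewed prism of `G` with linking paths `P₁,P₂,P₃`, and `(G₁,G₂)` a
separation with `V(G₁) ∩ V(G₂) = {u,v}` and `uv ∉ E(G)`. Then (a) `H ∩ G₁` or `H ∩ G₂`
is empty, or (c) `H ∩ G₁` or `H ∩ G₂` is a subpath of one of `P₁,P₂,P₃`. -/
theorem stmt_16 {V : Type u} [Fintype V] (G : SimpleGraph V)
    (h2 : TwoConnected G) (hcf : ClawFree G) (hk4 : G.CliqueFree 4)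
    (hdeg : ∀ w : V, (G.neighborSet w).ncard ≤ 4)
    (x₁ x₂ x₃ y₁ y₂ y₃ : V)
    (P₁ : G.Walk x₁ y₁) (P₂ : G.Walk x₂ y₂) (P₃ : G.Walk x₃ y₃)
    (hH : IsSkewedPrism G x₁ x₂ x₃ y₁ y₂ y₃ P₁ P₂ P₃)
    (V₁ V₂ : Set V) (hunion : V₁ ∪ V₂ = Set.univ)
    (hprop₁ : V₁ ≠ Set.univ) (hprop₂ : V₂ ≠ Set.univ)
    (hedges : ∀ e ∈ G.edgeSet, (∀ x ∈ e, x ∈ V₁) ∨ (∀ x ∈ e, x ∈ V₂))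
    (u v : V) (huv : u ≠ v) (hsep : V₁ ∩ V₂ = {u, v}) (hnadj : ¬ G.Adj u v) :
    -- the vertex set of the skewed prism
    (({x | x ∈ P₁.support ∨ x ∈ P₂.support ∨ x ∈ P₃.support} ∩ V₁ = ∅) ∨
     ({x | x ∈ P₁.support ∨ x ∈ P₂.support ∨ x ∈ P₃.support} ∩ V₂ = ∅)) ∨
    ((∃ (c d : V) (W : G.Walk c d), W.IsPath ∧
        (W.support <:+: P₁.support ∨ W.support <:+: P₂.support ∨
          W.support <:+: P₃.support) ∧
        {x | x ∈ P₁.support ∨ x ∈ P₂.support ∨ x ∈ P₃.support} ∩ V₁ =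
          {x | x ∈ W.support}) ∨
     (∃ (c d : V) (W : G.Walk c d), W.IsPath ∧
        (W.support <:+: P₁.support ∨ W.support <:+: P₂.support ∨
          W.support <:+: P₃.support) ∧
        {x | x ∈ P₁.support ∨ x ∈ P₂.support ∨ x ∈ P₃.support} ∩ V₂ =
          {x | x ∈ W.support})) := by
  classical
  obtain ⟨hP1, hP2, hP3, he1, he2, ho3, hd12, hd13, hd23, hx12, hx13, hx23,
    hy12, hy13, hy23, hiffraw⟩ := hH
  have hconn : ∀ w : V, ((⊤ : G.Subgraph).deleteVerts {w}).coe.Connected := h2.2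
  have hclaw : ∀ w a b c : V, G.Adj w a → G.Adj w b → G.Adj w c → a ≠ b → a ≠ c → b ≠ c →
      ¬G.Adj a b → ¬G.Adj a c → ¬G.Adj b c → False := by
    intro w a b c h1 h2' h3 h4 h5 h6 h7 h8 h9
    exact hcf w ⟨a, b, c, h1, h2', h3, h4, h5, h6, h7, h8, h9⟩
  have hiff : ∀ a b : V,
      (a ∈ P₁.support ∨ a ∈ P₂.support ∨ a ∈ P₃.support) →
      (b ∈ P₁.support ∨ b ∈ P₂.support ∨ b ∈ P₃.support) →
      G.Adj a b →
      s(a,b) ∈ P₁.edges ∨ s(a,b) ∈ P₂.edges ∨ s(a,b) ∈ P₃.edges ∨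
      s(a,b) = s(x₁,x₂) ∨ s(a,b) = s(x₁,x₃) ∨ s(a,b) = s(x₂,x₃) ∨
      s(a,b) = s(y₁,y₂) ∨ s(a,b) = s(y₁,y₃) ∨ s(a,b) = s(y₂,y₃) := by
    intro a b ha hb hadj
    have ha' : a ∈ P₁.support ++ P₂.support ++ P₃.support := by
      simp only [List.mem_append]; tauto
    have hb' : b ∈ P₁.support ++ P₂.support ++ P₃.support := by
      simp only [List.mem_append]; tauto
    have h := (hiffraw a b ha' hb').mp hadj
    rcases h with h | h | h | h
    · exact Or.inl h
    · exact Or.inr (Or.inl h)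
    · exact Or.inr (Or.inr (Or.inl h))
    · simp only [List.mem_cons, List.not_mem_nil, or_false] at h
      rcases h with h | h | h | h | h | h
      · exact Or.inr (Or.inr (Or.inr (Or.inl h)))
      · exact Or.inr (Or.inr (Or.inr (Or.inr (Or.inl h))))
      · exact Or.inr (Or.inr (Or.inr (Or.inr (Or.inr (Or.inl h)))))
      · exact Or.inr (Or.inr (Or.inr (Or.inr (Or.inr (Or.inr (Or.inl h))))))
      · exact Or.inr (Or.inr (Or.inr (Or.inr (Or.inr (Or.inr (Or.inr (Or.inl h)))))))
      · exact Or.inr (Or.inr (Or.inr (Or.inr (Or.inr (Or.inr (Or.inr (Or.inr h)))))))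
  -- a path avoiding both u and v
  have havoid : (u ∉ P₁.support ∧ v ∉ P₁.support) ∨ (u ∉ P₂.support ∧ v ∉ P₂.support) ∨
      (u ∉ P₃.support ∧ v ∉ P₃.support) := by
    by_cases h1 : u ∈ P₁.support ∨ v ∈ P₁.support
    · by_cases h2 : u ∈ P₂.support ∨ v ∈ P₂.support
      · right; right
        rcases h1 with h1 | h1 <;> rcases h2 with h2 | h2
        · exact (hd12 h1 h2).elim
        · exact ⟨fun h => hd13 h1 h, fun h => hd23 h2 h⟩
        · exact ⟨fun h => hd23 h2 h, fun h => hd13 h1 h⟩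
        · exact (hd12 h1 h2).elim
      · push_neg at h2
        exact Or.inr (Or.inl h2)
    · push_neg at h1
      exact Or.inl h1
  have huv12 : u ∈ V₁ ∩ V₂ := by rw [hsep]; simp
  have hvv12 : v ∈ V₁ ∩ V₂ := by rw [hsep]; simp
  have hedges2 : ∀ e ∈ G.edgeSet, (∀ z ∈ e, z ∈ V₂) ∨ (∀ z ∈ e, z ∈ V₁) :=
    fun e he => (hedges e he).symm
  have hsep2 : V₂ ∩ V₁ = {u, v} := by rw [Set.inter_comm]; exact hsep
  have hunion2 : V₂ ∪ V₁ = Set.univ := by rw [Set.union_comm]; exact hunion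
  have hAne1 : ∃ z, z ∉ V₁ := (Set.ne_univ_iff_exists_notMem V₁).mp hprop₁
  have hAne2 : ∃ z, z ∉ V₂ := (Set.ne_univ_iff_exists_notMem V₂).mp hprop₂
  -- a helper: propagate side along an edge from a strictly-one-sided vertex
  have hside : ∀ (A B : Set V), (∀ e ∈ G.edgeSet, (∀ z ∈ e, z ∈ A) ∨ (∀ z ∈ e, z ∈ B)) →
      ∀ w w' : V, w ∉ B → G.Adj w w' → w' ∈ A := by
    intro A B hed w w' hwB hadj
    rcases hed s(w, w') hadj with h | h
    · exact h w' (Sym2.mem_mk_right _ _)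
    · exact absurd (h w (Sym2.mem_mk_left _ _)) hwB
  -- main case analysis over the avoiding path and its side
  rcases havoid with ⟨hu0, hv0⟩ | ⟨hu0, hv0⟩ | ⟨hu0, hv0⟩
  · -- P₁ avoids u, v
    by_cases hx : x₁ ∈ V₁
    · have hxB : x₁ ∉ V₂ := by
        intro hB
        have h : x₁ ∈ ({u, v} : Set V) := by rw [← hsep]; exact ⟨hx, hB⟩
        rcases h with rfl | rfl
        · exact hu0 P₁.start_mem_support
        · exact hv0 P₁.start_mem_support
      have hyA : y₁ ∈ V₁ := by
        by_contra hy
        exact Stmt16Aux.conn_absurd hedges hsep P₁.reverse hy hx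
          (by rwa [SimpleGraph.Walk.support_reverse, List.mem_reverse])
          (by rwa [SimpleGraph.Walk.support_reverse, List.mem_reverse])
      have hyB : y₁ ∉ V₂ := by
        intro hB
        have h : y₁ ∈ ({u, v} : Set V) := by rw [← hsep]; exact ⟨hyA, hB⟩
        rcases h with rfl | rfl
        · exact hu0 P₁.end_mem_support
        · exact hv0 P₁.end_mem_support
      have ht2 : x₂ ∈ V₁ := hside V₁ V₂ hedges x₁ x₂ hxB hx12
      have ht3 : x₃ ∈ V₁ := hside V₁ V₂ hedges x₁ x₃ hxB hx13
      have ht5 : y₂ ∈ V₁ := hside V₁ V₂ hedges y₁ y₂ hyB hy12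
      have ht6 : y₃ ∈ V₁ := hside V₁ V₂ hedges y₁ y₃ hyB hy13
      rcases Stmt16Aux.main_lemma hconn hclaw hk4 hunion hedges hsep huv hnadj hAne1
        hP1 hP2 hP3 ho3 hd12 hd13 hd23 hx12 hx13 hx23 hy12 hy13 hy23 hiff
        hx ht2 ht3 hyA ht5 ht6 with h | h
      · exact Or.inl (Or.inr h)
      · exact Or.inr (Or.inr h)
    · have hx2 : x₁ ∈ V₂ := by
        have h : x₁ ∈ V₁ ∪ V₂ := by rw [hunion]; trivial
        rcases h with h | h
        · exact absurd h hx
        · exact h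
      have hyA : y₁ ∈ V₂ := by
        by_contra hy
        exact Stmt16Aux.conn_absurd hedges2 hsep2 P₁.reverse hy hx2
          (by rwa [SimpleGraph.Walk.support_reverse, List.mem_reverse])
          (by rwa [SimpleGraph.Walk.support_reverse, List.mem_reverse])
      have hyB : y₁ ∉ V₁ := by
        intro hB
        have h : y₁ ∈ ({u, v} : Set V) := by rw [← hsep]; exact ⟨hB, hyA⟩
        rcases h with rfl | rfl
        · exact hu0 P₁.end_mem_support
        · exact hv0 P₁.end_mem_support
      have ht2 : x₂ ∈ V₂ := hside V₂ V₁ hedges2 x₁ x₂ hx hx12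
      have ht3 : x₃ ∈ V₂ := hside V₂ V₁ hedges2 x₁ x₃ hx hx13
      have ht5 : y₂ ∈ V₂ := hside V₂ V₁ hedges2 y₁ y₂ hyB hy12
      have ht6 : y₃ ∈ V₂ := hside V₂ V₁ hedges2 y₁ y₃ hyB hy13
      rcases Stmt16Aux.main_lemma hconn hclaw hk4 hunion2 hedges2 hsep2 huv hnadj hAne2
        hP1 hP2 hP3 ho3 hd12 hd13 hd23 hx12 hx13 hx23 hy12 hy13 hy23 hiff
        hx2 ht2 ht3 hyA ht5 ht6 with h | h
      · exact Or.inl (Or.inl h)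
      · exact Or.inr (Or.inl h)
  · -- P₂ avoids u, v
    by_cases hx : x₂ ∈ V₁
    · have hxB : x₂ ∉ V₂ := by
        intro hB
        have h : x₂ ∈ ({u, v} : Set V) := by rw [← hsep]; exact ⟨hx, hB⟩
        rcases h with rfl | rfl
        · exact hu0 P₂.start_mem_support
        · exact hv0 P₂.start_mem_support
      have hyA : y₂ ∈ V₁ := by
        by_contra hy
        exact Stmt16Aux.conn_absurd hedges hsep P₂.reverse hy hx
          (by rwa [SimpleGraph.Walk.support_reverse, List.mem_reverse])
          (by rwa [SimpleGraph.Walk.support_reverse, List.mem_reverse])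
      have hyB : y₂ ∉ V₂ := by
        intro hB
        have h : y₂ ∈ ({u, v} : Set V) := by rw [← hsep]; exact ⟨hyA, hB⟩
        rcases h with rfl | rfl
        · exact hu0 P₂.end_mem_support
        · exact hv0 P₂.end_mem_support
      have ht1 : x₁ ∈ V₁ := hside V₁ V₂ hedges x₂ x₁ hxB hx12.symm
      have ht3 : x₃ ∈ V₁ := hside V₁ V₂ hedges x₂ x₃ hxB hx23
      have ht4 : y₁ ∈ V₁ := hside V₁ V₂ hedges y₂ y₁ hyB hy12.symm
      have ht6 : y₃ ∈ V₁ := hside V₁ V₂ hedges y₂ y₃ hyB hy23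
      rcases Stmt16Aux.main_lemma hconn hclaw hk4 hunion hedges hsep huv hnadj hAne1
        hP1 hP2 hP3 ho3 hd12 hd13 hd23 hx12 hx13 hx23 hy12 hy13 hy23 hiff
        ht1 hx ht3 ht4 hyA ht6 with h | h
      · exact Or.inl (Or.inr h)
      · exact Or.inr (Or.inr h)
    · have hx2 : x₂ ∈ V₂ := by
        have h : x₂ ∈ V₁ ∪ V₂ := by rw [hunion]; trivial
        rcases h with h | h
        · exact absurd h hx
        · exact h
      have hyA : y₂ ∈ V₂ := by
        by_contra hy
        exact Stmt16Aux.conn_absurd hedges2 hsep2 P₂.reverse hy hx2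
          (by rwa [SimpleGraph.Walk.support_reverse, List.mem_reverse])
          (by rwa [SimpleGraph.Walk.support_reverse, List.mem_reverse])
      have hyB : y₂ ∉ V₁ := by
        intro hB
        have h : y₂ ∈ ({u, v} : Set V) := by rw [← hsep]; exact ⟨hB, hyA⟩
        rcases h with rfl | rfl
        · exact hu0 P₂.end_mem_support
        · exact hv0 P₂.end_mem_support
      have ht1 : x₁ ∈ V₂ := hside V₂ V₁ hedges2 x₂ x₁ hx hx12.symm
      have ht3 : x₃ ∈ V₂ := hside V₂ V₁ hedges2 x₂ x₃ hx hx23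
      have ht4 : y₁ ∈ V₂ := hside V₂ V₁ hedges2 y₂ y₁ hyB hy12.symm
      have ht6 : y₃ ∈ V₂ := hside V₂ V₁ hedges2 y₂ y₃ hyB hy23
      rcases Stmt16Aux.main_lemma hconn hclaw hk4 hunion2 hedges2 hsep2 huv hnadj hAne2
        hP1 hP2 hP3 ho3 hd12 hd13 hd23 hx12 hx13 hx23 hy12 hy13 hy23 hiff
        ht1 hx2 ht3 ht4 hyA ht6 with h | h
      · exact Or.inl (Or.inl h)
      · exact Or.inr (Or.inl h)
  · -- P₃ avoids u, v
    by_cases hx : x₃ ∈ V₁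
    · have hxB : x₃ ∉ V₂ := by
        intro hB
        have h : x₃ ∈ ({u, v} : Set V) := by rw [← hsep]; exact ⟨hx, hB⟩
        rcases h with rfl | rfl
        · exact hu0 P₃.start_mem_support
        · exact hv0 P₃.start_mem_support
      have hyA : y₃ ∈ V₁ := by
        by_contra hy
        exact Stmt16Aux.conn_absurd hedges hsep P₃.reverse hy hx
          (by rwa [SimpleGraph.Walk.support_reverse, List.mem_reverse])
          (by rwa [SimpleGraph.Walk.support_reverse, List.mem_reverse])
      have hyB : y₃ ∉ V₂ := by
        intro hB
        have h : y₃ ∈ ({u, v} : Set V) := by rw [← hsep]; exact ⟨hyA, hB⟩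
        rcases h with rfl | rfl
        · exact hu0 P₃.end_mem_support
        · exact hv0 P₃.end_mem_support
      have ht1 : x₁ ∈ V₁ := hside V₁ V₂ hedges x₃ x₁ hxB hx13.symm
      have ht2 : x₂ ∈ V₁ := hside V₁ V₂ hedges x₃ x₂ hxB hx23.symm
      have ht4 : y₁ ∈ V₁ := hside V₁ V₂ hedges y₃ y₁ hyB hy13.symm
      have ht5 : y₂ ∈ V₁ := hside V₁ V₂ hedges y₃ y₂ hyB hy23.symm
      rcases Stmt16Aux.main_lemma hconn hclaw hk4 hunion hedges hsep huv hnadj hAne1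
        hP1 hP2 hP3 ho3 hd12 hd13 hd23 hx12 hx13 hx23 hy12 hy13 hy23 hiff
        ht1 ht2 hx ht4 ht5 hyA with h | h
      · exact Or.inl (Or.inr h)
      · exact Or.inr (Or.inr h)
    · have hx2 : x₃ ∈ V₂ := by
        have h : x₃ ∈ V₁ ∪ V₂ := by rw [hunion]; trivial
        rcases h with h | h
        · exact absurd h hx
        · exact h
      have hyA : y₃ ∈ V₂ := by
        by_contra hy
        exact Stmt16Aux.conn_absurd hedges2 hsep2 P₃.reverse hy hx2
          (by rwa [SimpleGraph.Walk.support_reverse, List.mem_reverse])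
          (by rwa [SimpleGraph.Walk.support_reverse, List.mem_reverse])
      have hyB : y₃ ∉ V₁ := by
        intro hB
        have h : y₃ ∈ ({u, v} : Set V) := by rw [← hsep]; exact ⟨hB, hyA⟩
        rcases h with rfl | rfl
        · exact hu0 P₃.end_mem_support
        · exact hv0 P₃.end_mem_support
      have ht1 : x₁ ∈ V₂ := hside V₂ V₁ hedges2 x₃ x₁ hx hx13.symm
      have ht2 : x₂ ∈ V₂ := hside V₂ V₁ hedges2 x₃ x₂ hx hx23.symm
      have ht4 : y₁ ∈ V₂ := hside V₂ V₁ hedges2 y₃ y₁ hyB hy13.symm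
      have ht5 : y₂ ∈ V₂ := hside V₂ V₁ hedges2 y₃ y₂ hyB hy23.symm
      rcases Stmt16Aux.main_lemma hconn hclaw hk4 hunion2 hedges2 hsep2 huv hnadj hAne2
        hP1 hP2 hP3 ho3 hd12 hd13 hd23 hx12 hx13 hx23 hy12 hy13 hy23 hiff
        ht1 ht2 hx2 ht4 ht5 hyA with h | h
      · exact Or.inl (Or.inl h)
      · exact Or.inr (Or.inl h)
end

section
/- Let (G1,G2) be a separation of a graph G such that G1 ∩ G2 induces a complete graph. Then G is t-perfect if and only if both G1 and G2 are t-perfect. -/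
open SimpleGraph

attribute [local instance] Classical.propDecidable

universe u

variable {V : Type u}

/-! ### Auxiliary lemmas -/

theorem toFinset_indep {α : Type u} (l : List α) (i1 i2 : DecidableEq α) :
    @List.toFinset α i1 l = @List.toFinset α i2 l := by
  cases Subsingleton.elim i1 i2; rfl

theorem dartSum {G : SimpleGraph V} (y : V → ℝ) : ∀ {a b : V} (p : G.Walk a b),
    (p.darts.map (fun d => y d.fst + y d.snd)).sum
      = 2 * (p.support.map y).sum - y a - y b := by
  intro a b p
  induction p with
  | nil => simp; ring
  | cons h q ih => simp [ih]; ring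

theorem dartSum_le {G : SimpleGraph V} (y : V → ℝ)
    (he : ∀ u v, G.Adj u v → y u + y v ≤ 1)
    {a b : V} (p : G.Walk a b) :
    (p.darts.map (fun d => y d.fst + y d.snd)).sum ≤ p.length := by
  rw [← Walk.length_darts]
  calc (p.darts.map (fun d => y d.fst + y d.snd)).sum
      ≤ (p.darts.map (fun _ => (1:ℝ))).sum := by
        apply List.sum_le_sum
        intro d hd
        exact he _ _ d.adj
    _ = p.darts.length := by simp

theorem walkSum_le {G : SimpleGraph V} (y : V → ℝ) (hy1 : ∀ v, y v ≤ 1)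
    (he : ∀ u v, G.Adj u v → y u + y v ≤ 1) :
    ∀ {a b : V} (p : G.Walk a b),
      (p.support.map y).sum ≤ ((p.length + 1) / 2 : ℕ) + y b
  | _, _, Walk.nil => by simp
  | _, _, @Walk.cons _ _ a c _ h Walk.nil => by
      simp only [Walk.support_cons, Walk.support_nil, List.map_cons, List.map_nil,
        List.sum_cons, List.sum_nil, Walk.length_cons, Walk.length_nil]
      norm_num
      linarith [hy1 a]
  | _, _, Walk.cons h (Walk.cons h' q) => by
      have ih := walkSum_le y hy1 he q
      simp only [Walk.support_cons, List.map_cons, List.sum_cons, Walk.length_cons]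
      have hcast : ((q.length + 1 + 1 + 1) / 2 : ℕ) = ((q.length + 1) / 2 : ℕ) + 1 := by omega
      rw [hcast]
      push_cast
      have := he _ _ h
      linarith

open Classical in
theorem cycle_finset_sum {G : SimpleGraph V} (y : V → ℝ) {v : V} {c : G.Walk v v}
    (hc : c.IsCycle) :
    ∑ u ∈ c.support.toFinset, y u = (c.support.tail.map y).sum := by
  classical
  have htf : c.support.toFinset = c.support.tail.toFinset := by
    rw [c.support_eq_cons, List.toFinset_cons]
    have hv : v ∈ c.support.tail := by
      cases c with
      | nil => exact absurd hc (Walk.IsCycle.not_of_nil)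
      | cons h q => simpa using q.end_mem_support
    simp [List.mem_toFinset.mpr hv, Finset.insert_eq_self.mpr (List.mem_toFinset.mpr hv)]
  rw [htf, List.sum_toFinset _ hc.support_nodup]

open Classical in
theorem cycle_sum_CY1 {G : SimpleGraph V} (y : V → ℝ)
    (he : ∀ u v, G.Adj u v → y u + y v ≤ 1)
    {v : V} {c : G.Walk v v} (hc : c.IsCycle) :
    2 * ∑ u ∈ c.support.toFinset, y u ≤ c.length := by
  classical
  rw [cycle_finset_sum y hc]
  have hd := dartSum y c
  have hdle := dartSum_le y he c
  have hs : (c.support.map y).sum = y v + (c.support.tail.map y).sum := by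
    rw [c.support_eq_cons]; simp only [List.map_cons, List.sum_cons, List.tail_cons]
  rw [hs] at hd
  linarith

open Classical in
theorem cycle_sum_CY2 {G : SimpleGraph V} (y : V → ℝ) (hy1 : ∀ v, y v ≤ 1)
    (he : ∀ u v, G.Adj u v → y u + y v ≤ 1)
    {v : V} {c : G.Walk v v} (hc : c.IsCycle) (hv : y v = 0) :
    ∑ u ∈ c.support.toFinset, y u ≤ ((c.length / 2 : ℕ) : ℝ) := by
  classical
  rw [cycle_finset_sum y hc]
  cases c with
  | nil => exact absurd hc (Walk.IsCycle.not_of_nil)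
  | @cons _ w _ h q =>
    have hq := walkSum_le y hy1 he q
    rw [hv] at hq
    simp only [Walk.support_cons, List.tail_cons, Walk.length_cons]
    calc (q.support.map y).sum ≤ ((q.length + 1) / 2 : ℕ) + 0 := hq
      _ = (((q.length + 1) / 2 : ℕ) : ℝ) := by ring

theorem TSTAB_convex (G : SimpleGraph V) [Fintype V] : Convex ℝ (TSTAB G) := by
  intro x hx y hy a b ha hb hab
  obtain ⟨hx0, hxe, hxc⟩ := hx
  obtain ⟨hy0, hye, hyc⟩ := hy
  have happ : ∀ v, (a • x + b • y) v = a * x v + b * y v := fun v => by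
    simp [smul_eq_mul]
  refine ⟨fun v => ?_, fun u v huv => ?_, fun v c hc hodd => ?_⟩
  · rw [happ]
    constructor
    · have := (hx0 v).1; have := (hy0 v).1; positivity
    · nlinarith [(hx0 v).2, (hy0 v).2]
  · rw [happ, happ]
    nlinarith [hxe u v huv, hye u v huv]
  · have : ∑ u ∈ c.support.toFinset, (a • x + b • y) u
        = a * (∑ u ∈ c.support.toFinset, x u) + b * (∑ u ∈ c.support.toFinset, y u) := by
      rw [Finset.mul_sum, Finset.mul_sum, ← Finset.sum_add_distrib]
      exact Finset.sum_congr rfl fun u _ => happ u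
    rw [this]
    nlinarith [hxc v c hc hodd, hyc v c hc hodd]

theorem indicator_mem_TSTAB (G : SimpleGraph V) [Fintype V] {s : Set V}
    (hs : StableSet G s) : s.indicator 1 ∈ TSTAB G := by
  classical
  have happ : ∀ v, s.indicator (1 : V → ℝ) v = if v ∈ s then 1 else 0 := fun v => by
    simp [Set.indicator_apply]
  have hedge : ∀ u v, G.Adj u v → s.indicator (1:V→ℝ) u + s.indicator (1:V→ℝ) v ≤ 1 := by
    intro u v huv
    rw [happ, happ]
    by_cases hu : u ∈ s <;> by_cases hv : v ∈ s <;> simp [hu, hv]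
    exact absurd huv (hs hu hv (G.ne_of_adj huv))
  refine ⟨fun v => ?_, hedge, fun v c hc hodd => ?_⟩
  · rw [happ]; split <;> norm_num
  · have hsum : ∑ u ∈ c.support.toFinset, s.indicator (1:V→ℝ) u
        = ((c.support.toFinset.filter (· ∈ s)).card : ℝ) := by
      rw [← Finset.sum_boole]
      exact Finset.sum_congr rfl fun u _ => happ u
    rw [hsum]
    have h2 := cycle_sum_CY1 (G := G) (s.indicator 1) hedge hc
    rw [hsum] at h2
    have h2' : 2 * (c.support.toFinset.filter (· ∈ s)).card ≤ c.length := by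
      exact_mod_cast h2
    have : (c.support.toFinset.filter (· ∈ s)).card ≤ c.length / 2 := by omega
    exact_mod_cast this

theorem polytope_subset_TSTAB (G : SimpleGraph V) [Fintype V] :
    stableSetPolytope G ⊆ TSTAB G := by
  apply convexHull_min _ (TSTAB_convex G)
  rintro x ⟨s, hs, rfl⟩
  exact indicator_mem_TSTAB G hs

def liftWalk {G : SimpleGraph V} {S : Set V} :
    ∀ {a b : V} (p : G.Walk a b) (h : ∀ x ∈ p.support, x ∈ S),
      (G.induce S).Walk ⟨a, h a p.start_mem_support⟩ ⟨b, h b p.end_mem_support⟩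
  | _, _, Walk.nil, _ => Walk.nil
  | _, _, Walk.cons ha q, h =>
      Walk.cons (by exact ha)
        (liftWalk q (fun x hx => h x (by simp [Walk.support_cons, hx])))

theorem liftWalk_map {G : SimpleGraph V} {S : Set V} :
    ∀ {a b : V} (p : G.Walk a b) (h : ∀ x ∈ p.support, x ∈ S),
      (liftWalk p h).map (Embedding.induce S).toHom = p
  | _, _, Walk.nil, _ => rfl
  | _, _, Walk.cons ha q, h => by
      simp only [liftWalk, Walk.map_cons]
      exact congrArg (Walk.cons ha) (liftWalk_map q _)

theorem induce_hom_injective (G : SimpleGraph V) (S : Set V) :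
    Function.Injective (Embedding.induce (G := G) S).toHom := Subtype.val_injective

theorem sum_toFinset_map_val {S : Set V} (x : V → ℝ) (l : List (Subtype (· ∈ S)))
    (i1 : DecidableEq V) (i2 : DecidableEq (Subtype (· ∈ S))) :
    ∑ u ∈ @List.toFinset _ i1 (l.map Subtype.val), x u
      = ∑ u ∈ @List.toFinset _ i2 l, x u.1 := by
  have himg : @List.toFinset _ i1 (l.map Subtype.val)
      = @Finset.image _ _ i1 Subtype.val (@List.toFinset _ i2 l) := by
    ext b
    constructor
    · intro hb
      obtain ⟨c, hc, rfl⟩ := List.mem_map.mp (List.mem_toFinset.mp hb)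
      exact Finset.mem_image.mpr ⟨c, List.mem_toFinset.mpr hc, rfl⟩
    · intro hb
      obtain ⟨c, hc, rfl⟩ := Finset.mem_image.mp hb
      exact List.mem_toFinset.mpr (List.mem_map.mpr ⟨c, List.mem_toFinset.mp hc, rfl⟩)
  rw [himg]
  exact Finset.sum_image (fun a _ b _ h => Subtype.val_injective h)

theorem restrict_mem_TSTAB {G : SimpleGraph V} [Fintype V] (S : Set V) [Fintype ↥S]
    {x : V → ℝ} (hx : x ∈ TSTAB G) :
    (fun u : ↥S => x u.1) ∈ TSTAB (G.induce S) := by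
  obtain ⟨hx0, hxe, hxc⟩ := hx
  refine ⟨fun v => hx0 _, fun a b h => hxe _ _ h, ?_⟩
  intro v c hc hodd
  have hmc : (c.map (Embedding.induce S).toHom).IsCycle :=
    hc.map (induce_hom_injective G S)
  have h2 := hxc _ _ hmc (by rw [Walk.length_map]; exact hodd)
  rw [Walk.length_map, Walk.support_map] at h2
  have hco : (List.map (⇑(Embedding.induce (G := G) S).toHom) c.support)
      = List.map Subtype.val c.support := rfl
  rw [hco, sum_toFinset_map_val x c.support _ _] at h2
  exact h2

theorem tperfect_induce {G : SimpleGraph V} [Fintype V] (S : Set V) [Fintype ↥S]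
    (hG : TPerfect G) : TPerfect (G.induce S) := by
  classical
  apply Set.Subset.antisymm (polytope_subset_TSTAB _)
  intro x hx
  obtain ⟨hx0, hxe, hxc⟩ := hx
  set x' : V → ℝ := fun v => if h : v ∈ S then x ⟨v, h⟩ else 0 with hx'def
  have hx'S : ∀ (u : V) (hu : u ∈ S), x' u = x ⟨u, hu⟩ := fun u hu => dif_pos hu
  have hx'0 : ∀ v, 0 ≤ x' v ∧ x' v ≤ 1 := by
    intro v
    by_cases h : v ∈ S
    · rw [hx'S v h]; exact hx0 _
    · simp [hx'def, h]
  have hx'e : ∀ u v, G.Adj u v → x' u + x' v ≤ 1 := by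
    intro u v huv
    by_cases hu : u ∈ S <;> by_cases hv : v ∈ S
    · rw [hx'S u hu, hx'S v hv]
      exact hxe ⟨u, hu⟩ ⟨v, hv⟩ huv
    · simp only [hx'def, dif_neg hv]
      rw [add_zero]; exact ((hx'0 u).2)
    · simp only [hx'def, dif_neg hu]
      rw [zero_add]; exact ((hx'0 v).2)
    · simp only [hx'def, dif_neg hu, dif_neg hv]; norm_num
  have hx'c : ∀ (v : V) (c : G.Walk v v), c.IsCycle → Odd c.length →
      ∑ u ∈ c.support.toFinset, x' u ≤ ((c.length / 2 : ℕ) : ℝ) := by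
    intro v c hc hodd
    by_cases hS : ∀ u ∈ c.support, u ∈ S
    · set cHat := liftWalk c hS with hcHatdef
      have hmap := liftWalk_map c hS
      have hcHatcyc : cHat.IsCycle := by
        rw [← Walk.map_isCycle_iff_of_injective (induce_hom_injective G S), hmap]
        exact hc
      have hlen : cHat.length = c.length := by
        conv_rhs => rw [← hmap]
        exact (Walk.length_map _ _).symm
      have hsupp : c.support = cHat.support.map Subtype.val := by
        conv_lhs => rw [← hmap]
        exact Walk.support_map _ _
      have tfm : (cHat.support.map (Subtype.val : ↥S → V)).toFinset
          = cHat.support.toFinset.image Subtype.val := by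
        ext a
        simp only [List.mem_toFinset, List.mem_map, Finset.mem_image, Subtype.exists]
      rw [hsupp, tfm, Finset.sum_image (fun a _ b _ h => Subtype.val_injective h)]
      have hgoal := hxc _ cHat hcHatcyc (hlen ▸ hodd)
      rw [← hlen]
      convert hgoal using 2
      all_goals
        first
          | (exact toFinset_indep _ _ _)
          | (rename_i w _; exact hx'S _ w.2)
          | rfl
    · push_neg at hS
      obtain ⟨u, hu, huS⟩ := hS
      have hc' := hc.rotate hu
      have hlen' : (c.rotate u hu).length = c.length := by
        rw [← Walk.length_darts, ← Walk.length_darts]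
        exact ((c.rotate_darts u hu).perm.length_eq)
      have closed_tf : ∀ {w : V} (p : G.Walk w w), ¬ p.Nil →
          p.support.toFinset = p.support.tail.toFinset := by
        intro w p hp
        rw [p.support_eq_cons, List.toFinset_cons]
        have hw : w ∈ p.support.tail := by
          cases p with
          | nil => exact absurd Walk.nil_nil hp
          | cons h q => simpa using q.end_mem_support
        exact Finset.insert_eq_self.mpr (List.mem_toFinset.mpr hw)
      have hsupp' : (c.rotate u hu).support.toFinset = c.support.toFinset := by
        rw [closed_tf _ hc'.not_nil, closed_tf _ hc.not_nil]
        exact List.toFinset_eq_of_perm _ _ (Walk.support_rotate c u hu).perm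
      have := cycle_sum_CY2 x' (fun v => (hx'0 v).2) hx'e hc'
        (by simp [hx'def, huS])
      rw [hsupp', hlen'] at this
      exact this
  have hx'mem : x' ∈ stableSetPolytope G := by
    rw [hG]; exact ⟨hx'0, hx'e, hx'c⟩
  set L : (V → ℝ) →ₗ[ℝ] (↥S → ℝ) := LinearMap.funLeft ℝ ℝ (Subtype.val) with hL
  have hLx : L x' = x := by
    funext u
    show x' u.val = x u
    rw [hx'S _ u.2]
  have himg : L '' {y : V → ℝ | ∃ s : Set V, StableSet G s ∧ y = s.indicator 1}
      ⊆ {y : ↥S → ℝ | ∃ s : Set ↥S, StableSet (G.induce S) s ∧ y = s.indicator 1} := by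
    rintro _ ⟨y, ⟨s, hs, rfl⟩, rfl⟩
    refine ⟨Subtype.val ⁻¹' s, ?_, ?_⟩
    · intro a ha b hb hab hadj
      exact hs ha hb (fun h => hab (Subtype.ext h)) hadj
    · funext u
      show s.indicator 1 u.val = _
      simp [Set.indicator_apply, Set.mem_preimage]
  have hmem2 : L x' ∈ convexHull ℝ
      (L '' {y : V → ℝ | ∃ s : Set V, StableSet G s ∧ y = s.indicator 1}) := by
    rw [← LinearMap.image_convexHull]
    exact Set.mem_image_of_mem L hx'mem
  rw [hLx] at hmem2
  exact convexHull_mono himg hmem2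

theorem cancel_sum {ι : Type} (t : Finset ι) (uu : ι → ℝ) (P : ι → Prop)
    (r : ℝ) (hr0 : 0 ≤ r)
    (hrS : r ≤ ∑ j ∈ t, (if P j then uu j else 0)) :
    ∑ j ∈ t, (if P j then r * uu j / (∑ j' ∈ t, (if P j' then uu j' else 0)) else 0)
      = r := by
  set S := ∑ j' ∈ t, (if P j' then uu j' else 0) with hS
  have hfac : ∀ j, (if P j then r * uu j / S else 0)
      = (r / S) * (if P j then uu j else 0) := by
    intro j
    by_cases h : P j <;> simp [h] <;> ring
  rw [Finset.sum_congr rfl fun j _ => hfac j, ← Finset.mul_sum, ← hS]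
  rcases eq_or_ne S 0 with h0 | h0
  · rw [h0, mul_zero]
    have : r ≤ 0 := h0 ▸ hrS
    linarith
  · field_simp

theorem single_le_cond_sum {ι : Type} (t : Finset ι) (uu : ι → ℝ)
    (hu : ∀ j ∈ t, 0 ≤ uu j) (P : ι → Prop) {i : ι} (hi : i ∈ t) (hP : P i) :
    uu i ≤ ∑ j ∈ t, (if P j then uu j else 0) := by
  have := Finset.single_le_sum (f := fun j => if P j then uu j else 0)
    (fun j hj => by by_cases h : P j <;> simp [h, hu j hj]) hi
  simpa [hP] using this

theorem mass_split {ι : Type} (t : Finset ι) (w : ι → ℝ) (cl : ι → Set V)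
    (K : Finset V) (hcl : ∀ i ∈ t, (cl i = ∅) ∨ (∃ v ∈ K, cl i = {v})) :
    ∑ i ∈ t, w i = (∑ i ∈ t, if cl i = ∅ then w i else 0)
      + ∑ v ∈ K, ∑ i ∈ t, (if cl i = {v} then w i else 0) := by
  rw [show (∑ v ∈ K, ∑ i ∈ t, (if cl i = {v} then w i else 0))
      = ∑ i ∈ t, ∑ v ∈ K, (if cl i = {v} then w i else 0) from Finset.sum_comm]
  rw [← Finset.sum_add_distrib]
  refine Finset.sum_congr rfl fun i hi => ?_
  rcases hcl i hi with h0 | ⟨v₀, hv₀K, hv₀⟩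
  · rw [if_pos h0]
    have : ∀ v ∈ K, (if cl i = {v} then w i else 0) = 0 := by
      intro v _
      rw [if_neg]
      rw [h0]
      exact fun h => Set.singleton_ne_empty v h.symm
    rw [Finset.sum_congr rfl this]
    simp
  · rw [if_neg (by rw [hv₀]; exact Set.singleton_ne_empty v₀), zero_add]
    rw [Finset.sum_eq_single v₀]
    · rw [if_pos hv₀]
    · intro v hv hne
      have hneq : cl i ≠ {v} := by
        rw [hv₀]
        intro h
        exact hne (Set.singleton_eq_singleton_iff.mp h).symm
      rw [if_neg hneq]
    · intro h
      exact absurd hv₀K h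

theorem tperfect_glue {G : SimpleGraph V} [Fintype V]
    (V₁ V₂ : Set V) [Fintype ↥V₁] [Fintype ↥V₂]
    (hunion : V₁ ∪ V₂ = Set.univ)
    (hedges : ∀ e ∈ G.edgeSet, (∀ y ∈ e, y ∈ V₁) ∨ (∀ y ∈ e, y ∈ V₂))
    (hclique : G.IsClique (V₁ ∩ V₂))
    (h₁ : TPerfect (G.induce V₁)) (h₂ : TPerfect (G.induce V₂)) :
    TPerfect G := by
  classical
  apply Set.Subset.antisymm (polytope_subset_TSTAB G)
  intro x hx
  set K : Set V := V₁ ∩ V₂ with hKdef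
  haveI : Fintype ↥K := Fintype.ofFinite _
  have hE : ∀ a b : V, G.Adj a b → (a ∈ V₁ ∧ b ∈ V₁) ∨ (a ∈ V₂ ∧ b ∈ V₂) := by
    intro a b hab
    rcases hedges s(a,b) hab with h | h
    · exact Or.inl ⟨h a (by simp), h b (by simp)⟩
    · exact Or.inr ⟨h a (by simp), h b (by simp)⟩
  -- decompositions of the two restrictions
  have hx₁ : (fun u : ↥V₁ => x u.1) ∈
      { y : ↥V₁ → ℝ | ∃ (ι : Type) (t : Finset ι) (w : ι → ℝ) (z : ι → ↥V₁ → ℝ),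
        (∀ i ∈ t, 0 ≤ w i) ∧ ∑ i ∈ t, w i = 1 ∧
        (∀ i ∈ t, z i ∈ {y : ↥V₁ → ℝ | ∃ s : Set ↥V₁, StableSet (G.induce V₁) s ∧ y = s.indicator 1}) ∧
        t.centerMass w z = y } := by
    rw [← convexHull_eq]
    have : (fun u : ↥V₁ => x u.1) ∈ stableSetPolytope (G.induce V₁) := by
      rw [h₁]; exact restrict_mem_TSTAB V₁ hx
    exact this
  have hx₂ : (fun u : ↥V₂ => x u.1) ∈
      { y : ↥V₂ → ℝ | ∃ (ι : Type) (t : Finset ι) (w : ι → ℝ) (z : ι → ↥V₂ → ℝ),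
        (∀ i ∈ t, 0 ≤ w i) ∧ ∑ i ∈ t, w i = 1 ∧
        (∀ i ∈ t, z i ∈ {y : ↥V₂ → ℝ | ∃ s : Set ↥V₂, StableSet (G.induce V₂) s ∧ y = s.indicator 1}) ∧
        t.centerMass w z = y } := by
    rw [← convexHull_eq]
    have : (fun u : ↥V₂ => x u.1) ∈ stableSetPolytope (G.induce V₂) := by
      rw [h₂]; exact restrict_mem_TSTAB V₂ hx
    exact this
  obtain ⟨ι₁, t₁, w, z₁, hw0, hw1, hz₁, hcm₁⟩ := hx₁
  obtain ⟨ι₂, t₂, uu, z₂, hu0, hu1, hz₂, hcm₂⟩ := hx₂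
  rw [Finset.centerMass_eq_of_sum_1 _ _ hw1] at hcm₁
  rw [Finset.centerMass_eq_of_sum_1 _ _ hu1] at hcm₂
  -- choose the stable sets
  have hzs₁ : ∀ i : ι₁, ∃ s : Set ↥V₁, i ∈ t₁ →
      StableSet (G.induce V₁) s ∧ z₁ i = s.indicator 1 := by
    intro i
    by_cases h : i ∈ t₁
    · obtain ⟨s, hs⟩ := hz₁ i h
      exact ⟨s, fun _ => hs⟩
    · exact ⟨∅, fun h' => absurd h' h⟩
  choose s₁ hs₁ using hzs₁
  have hzs₂ : ∀ j : ι₂, ∃ s : Set ↥V₂, j ∈ t₂ →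
      StableSet (G.induce V₂) s ∧ z₂ j = s.indicator 1 := by
    intro j
    by_cases h : j ∈ t₂
    · obtain ⟨s, hs⟩ := hz₂ j h
      exact ⟨s, fun _ => hs⟩
    · exact ⟨∅, fun h' => absurd h' h⟩
  choose s₂ hs₂ using hzs₂
  set A : ι₁ → Set V := fun i => Subtype.val '' s₁ i with hAdef
  set B : ι₂ → Set V := fun j => Subtype.val '' s₂ j with hBdef
  have hA₁ : ∀ i, A i ⊆ V₁ := by
    intro i
    rintro _ ⟨b, _, rfl⟩
    exact b.2
  have hB₂ : ∀ j, B j ⊆ V₂ := by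
    intro j
    rintro _ ⟨b, _, rfl⟩
    exact b.2
  -- coordinates
  have hxc1 : ∀ (a : V) (ha : a ∈ V₁), ∑ i ∈ t₁, (if a ∈ A i then w i else 0) = x a := by
    intro a ha
    have hcf := congrFun hcm₁ ⟨a, ha⟩
    rw [Finset.sum_apply] at hcf
    rw [← hcf]
    refine Finset.sum_congr rfl fun i hi => ?_
    have hzi := (hs₁ i hi).2
    have hmem : a ∈ A i ↔ (⟨a, ha⟩ : ↥V₁) ∈ s₁ i := by
      constructor
      · rintro ⟨b, hb, rfl⟩
        exact hb
      · intro h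
        exact ⟨_, h, rfl⟩
    rw [Pi.smul_apply, smul_eq_mul, hzi, Set.indicator_apply]
    by_cases hA : a ∈ A i
    · rw [if_pos hA, if_pos (hmem.mp hA)]
      simp
    · rw [if_neg hA, if_neg (fun h => hA (hmem.mpr h))]
      simp
  have hxc2 : ∀ (a : V) (ha : a ∈ V₂), ∑ j ∈ t₂, (if a ∈ B j then uu j else 0) = x a := by
    intro a ha
    have hcf := congrFun hcm₂ ⟨a, ha⟩
    rw [Finset.sum_apply] at hcf
    rw [← hcf]
    refine Finset.sum_congr rfl fun j hj => ?_
    have hzj := (hs₂ j hj).2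
    have hmem : a ∈ B j ↔ (⟨a, ha⟩ : ↥V₂) ∈ s₂ j := by
      constructor
      · rintro ⟨b, hb, rfl⟩
        exact hb
      · intro h
        exact ⟨_, h, rfl⟩
    rw [Pi.smul_apply, smul_eq_mul, hzj, Set.indicator_apply]
    by_cases hB : a ∈ B j
    · rw [if_pos hB, if_pos (hmem.mp hB)]
      simp
    · rw [if_neg hB, if_neg (fun h => hB (hmem.mpr h))]
      simp
  -- stability in G
  have hAstab : ∀ i ∈ t₁, StableSet G (A i) := by
    intro i hi a ha b hb hne hadj
    obtain ⟨a', ha', rfl⟩ := ha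
    obtain ⟨b', hb', rfl⟩ := hb
    have hne' : a' ≠ b' := fun h => hne (by rw [h])
    exact (hs₁ i hi).1 ha' hb' hne' hadj
  have hBstab : ∀ j ∈ t₂, StableSet G (B j) := by
    intro j hj a ha b hb hne hadj
    obtain ⟨a', ha', rfl⟩ := ha
    obtain ⟨b', hb', rfl⟩ := hb
    have hne' : a' ≠ b' := fun h => hne (by rw [h])
    exact (hs₂ j hj).1 ha' hb' hne' hadj
  -- classes are subsingletons
  have hAK : ∀ i ∈ t₁, ∀ a ∈ A i ∩ K, ∀ b ∈ A i ∩ K, a = b := by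
    intro i hi a ha b hb
    by_contra hne
    exact hAstab i hi ha.1 hb.1 hne (hclique ha.2 hb.2 hne)
  have hBK : ∀ j ∈ t₂, ∀ a ∈ B j ∩ K, ∀ b ∈ B j ∩ K, a = b := by
    intro j hj a ha b hb
    by_contra hne
    exact hBstab j hj ha.1 hb.1 hne (hclique ha.2 hb.2 hne)
  have hAshape : ∀ i ∈ t₁, (A i ∩ K = ∅) ∨ (∃ v ∈ K.toFinset, A i ∩ K = {v}) := by
    intro i hi
    rcases Set.eq_empty_or_nonempty (A i ∩ K) with h | ⟨v, hv⟩
    · exact Or.inl h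
    · refine Or.inr ⟨v, Set.mem_toFinset.mpr hv.2, ?_⟩
      ext b
      simp only [Set.mem_singleton_iff]
      exact ⟨fun hb => hAK i hi b hb v hv, fun hb => hb ▸ hv⟩
  have hBshape : ∀ j ∈ t₂, (B j ∩ K = ∅) ∨ (∃ v ∈ K.toFinset, B j ∩ K = {v}) := by
    intro j hj
    rcases Set.eq_empty_or_nonempty (B j ∩ K) with h | ⟨v, hv⟩
    · exact Or.inl h
    · refine Or.inr ⟨v, Set.mem_toFinset.mpr hv.2, ?_⟩
      ext b
      simp only [Set.mem_singleton_iff]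
      exact ⟨fun hb => hBK j hj b hb v hv, fun hb => hb ▸ hv⟩
  -- masses
  set m : Set V → ℝ := fun c => ∑ i ∈ t₁, (if A i ∩ K = c then w i else 0) with hmdef
  set m₂ : Set V → ℝ := fun c => ∑ j ∈ t₂, (if B j ∩ K = c then uu j else 0) with hm₂def
  have hmv : ∀ v ∈ K, m {v} = x v := by
    intro v hv
    have hcong : ∀ i ∈ t₁, (if A i ∩ K = {v} then w i else 0)
        = (if v ∈ A i then w i else 0) := by
      intro i hi
      refine if_congr ?_ rfl rfl
      constructor
      · intro h
        have hv' : v ∈ A i ∩ K := by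
          rw [h]
          exact Set.mem_singleton v
        exact hv'.1
      · intro hvA
        ext b
        simp only [Set.mem_singleton_iff]
        exact ⟨fun hb => hAK i hi b hb v ⟨hvA, hv⟩, fun hb => hb ▸ ⟨hvA, hv⟩⟩
    calc m {v} = ∑ i ∈ t₁, (if v ∈ A i then w i else 0) := Finset.sum_congr rfl hcong
      _ = x v := hxc1 v hv.1
  have hm₂v : ∀ v ∈ K, m₂ {v} = x v := by
    intro v hv
    have hcong : ∀ j ∈ t₂, (if B j ∩ K = {v} then uu j else 0)
        = (if v ∈ B j then uu j else 0) := by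
      intro j hj
      refine if_congr ?_ rfl rfl
      constructor
      · intro h
        have hv' : v ∈ B j ∩ K := by
          rw [h]
          exact Set.mem_singleton v
        exact hv'.1
      · intro hvB
        ext b
        simp only [Set.mem_singleton_iff]
        exact ⟨fun hb => hBK j hj b hb v ⟨hvB, hv⟩, fun hb => hb ▸ ⟨hvB, hv⟩⟩
    calc m₂ {v} = ∑ j ∈ t₂, (if v ∈ B j then uu j else 0) := Finset.sum_congr rfl hcong
      _ = x v := hxc2 v hv.2
  have hsplit₁ : (1:ℝ) = m ∅ + ∑ v ∈ K.toFinset, m {v} := by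
    rw [← hw1]
    exact mass_split t₁ w (fun i => A i ∩ K) K.toFinset hAshape
  have hsplit₂ : (1:ℝ) = m₂ ∅ + ∑ v ∈ K.toFinset, m₂ {v} := by
    rw [← hu1]
    exact mass_split t₂ uu (fun j => B j ∩ K) K.toFinset hBshape
  have hmm : ∀ c : Set V, (c = ∅ ∨ ∃ v ∈ K, c = {v}) → m c = m₂ c := by
    rintro c (rfl | ⟨v, hv, rfl⟩)
    · have hxsum : ∑ v ∈ K.toFinset, m {v} = ∑ v ∈ K.toFinset, m₂ {v} :=
        Finset.sum_congr rfl fun v hv => by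
          rw [hmv v (Set.mem_toFinset.mp hv), hm₂v v (Set.mem_toFinset.mp hv)]
      linarith [hsplit₁, hsplit₂, hxsum]
    · rw [hmv v hv, hm₂v v hv]
  have hAshape' : ∀ i ∈ t₁, (A i ∩ K = ∅) ∨ (∃ v ∈ K, A i ∩ K = {v}) := by
    intro i hi
    rcases hAshape i hi with h | ⟨v, hv, h⟩
    · exact Or.inl h
    · exact Or.inr ⟨v, Set.mem_toFinset.mp hv, h⟩
  have hBshape' : ∀ j ∈ t₂, (B j ∩ K = ∅) ∨ (∃ v ∈ K, B j ∩ K = {v}) := by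
    intro j hj
    rcases hBshape j hj with h | ⟨v, hv, h⟩
    · exact Or.inl h
    · exact Or.inr ⟨v, Set.mem_toFinset.mp hv, h⟩
  -- key cancellation identities
  have key1 : ∀ i ∈ t₁,
      ∑ j ∈ t₂, (if B j ∩ K = A i ∩ K then w i * uu j / m (A i ∩ K) else 0) = w i := by
    intro i hi
    have hmeq : m (A i ∩ K) = ∑ j' ∈ t₂, (if B j' ∩ K = A i ∩ K then uu j' else 0) := by
      rw [hmm (A i ∩ K) (hAshape' i hi)]
    have hle : w i ≤ ∑ j' ∈ t₂, (if B j' ∩ K = A i ∩ K then uu j' else 0) := by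
      rw [← hmeq]
      exact single_le_cond_sum t₁ w hw0 (fun i' => A i' ∩ K = A i ∩ K) hi rfl
    rw [hmeq]
    exact cancel_sum t₂ uu (fun j => B j ∩ K = A i ∩ K) (w i) (hw0 i hi) hle
  have key2 : ∀ j ∈ t₂,
      ∑ i ∈ t₁, (if B j ∩ K = A i ∩ K then w i * uu j / m (A i ∩ K) else 0) = uu j := by
    intro j hj
    have hcong : ∀ i ∈ t₁, (if B j ∩ K = A i ∩ K then w i * uu j / m (A i ∩ K) else 0)
        = (if A i ∩ K = B j ∩ K then
            uu j * w i / (∑ i' ∈ t₁, (if A i' ∩ K = B j ∩ K then w i' else 0)) else 0) := by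
      intro i hi
      by_cases h : B j ∩ K = A i ∩ K
      · rw [if_pos h, if_pos h.symm, ← h]
        have : m (B j ∩ K) = ∑ i' ∈ t₁, (if A i' ∩ K = B j ∩ K then w i' else 0) := rfl
        rw [this]
        ring
      · rw [if_neg h, if_neg (fun hh => h hh.symm)]
    rw [Finset.sum_congr rfl hcong]
    have hle : uu j ≤ ∑ i' ∈ t₁, (if A i' ∩ K = B j ∩ K then w i' else 0) := by
      have h1 : uu j ≤ m₂ (B j ∩ K) :=
        single_le_cond_sum t₂ uu hu0 (fun j' => B j' ∩ K = B j ∩ K) hj rfl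
      have h2 : m (B j ∩ K) = m₂ (B j ∩ K) := hmm _ (hBshape' j hj)
      calc uu j ≤ m₂ (B j ∩ K) := h1
        _ = m (B j ∩ K) := h2.symm
        _ = _ := rfl
    exact cancel_sum t₁ w (fun i => A i ∩ K = B j ∩ K) (uu j) (hu0 j hj) hle
  -- the coupled combination
  set T : Finset (ι₁ × ι₂) := (t₁ ×ˢ t₂).filter (fun p => B p.2 ∩ K = A p.1 ∩ K) with hTdef
  set Wt : ι₁ × ι₂ → ℝ := fun p => w p.1 * uu p.2 / m (A p.1 ∩ K) with hWtdef
  set Pt : ι₁ × ι₂ → (V → ℝ) := fun p => Set.indicator (A p.1 ∪ B p.2) 1 with hPtdef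
  have hWsum : ∑ p ∈ T, Wt p = 1 := by
    rw [hTdef, Finset.sum_filter, Finset.sum_product]
    rw [← hw1]
    exact Finset.sum_congr rfl key1
  have hW0 : ∀ p ∈ T, 0 ≤ Wt p := by
    intro p hp
    rw [hTdef, Finset.mem_filter, Finset.mem_product] at hp
    have hm0 : 0 ≤ m (A p.1 ∩ K) :=
      Finset.sum_nonneg fun i hi => by
        by_cases h : A i ∩ K = A p.1 ∩ K <;> simp [h, hw0 i hi]
    exact div_nonneg (mul_nonneg (hw0 _ hp.1.1) (hu0 _ hp.1.2)) hm0
  have hPmem : ∀ p ∈ T, Pt p ∈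
      {y : V → ℝ | ∃ s : Set V, StableSet G s ∧ y = s.indicator 1} := by
    intro p hp
    rw [hTdef, Finset.mem_filter, Finset.mem_product] at hp
    obtain ⟨⟨hp1, hp2⟩, hmatch⟩ := hp
    refine ⟨A p.1 ∪ B p.2, ?_, rfl⟩
    intro a ha b hb hne hadj
    have haA : ∀ c, c ∈ A p.1 ∪ B p.2 → c ∈ V₁ → c ∈ A p.1 := by
      intro c hc hcV₁
      rcases hc with h | h
      · exact h
      · have hcK : c ∈ B p.2 ∩ K := ⟨h, hcV₁, hB₂ p.2 h⟩
        rw [hmatch] at hcK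
        exact hcK.1
    have haB : ∀ c, c ∈ A p.1 ∪ B p.2 → c ∈ V₂ → c ∈ B p.2 := by
      intro c hc hcV₂
      rcases hc with h | h
      · have hcK : c ∈ A p.1 ∩ K := ⟨h, hA₁ p.1 h, hcV₂⟩
        rw [← hmatch] at hcK
        exact hcK.1
      · exact h
    rcases hE a b hadj with ⟨haV, hbV⟩ | ⟨haV, hbV⟩
    · exact hAstab p.1 hp1 (haA a ha haV) (haA b hb hbV) hne hadj
    · exact hBstab p.2 hp2 (haB a ha haV) (haB b hb hbV) hne hadj
  have hsum : ∑ p ∈ T, Wt p • Pt p = x := by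
    funext a
    rw [Finset.sum_apply]
    have hterm : ∀ p : ι₁ × ι₂, (Wt p • Pt p) a
        = (if a ∈ A p.1 ∪ B p.2 then Wt p else 0) := by
      intro p
      rw [Pi.smul_apply, smul_eq_mul]
      have : Pt p a = (if a ∈ A p.1 ∪ B p.2 then 1 else 0) := by
        rw [hPtdef]
        simp [Set.indicator_apply]
      rw [this]
      by_cases h : a ∈ A p.1 ∪ B p.2 <;> simp [h]
    rw [Finset.sum_congr rfl fun p _ => hterm p]
    rw [hTdef, Finset.sum_filter, Finset.sum_product]
    have haV : a ∈ V₁ ∨ (a ∈ V₂ ∧ a ∉ V₁) := by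
      by_cases h : a ∈ V₁
      · exact Or.inl h
      · have hau : a ∈ V₁ ∪ V₂ := by
          rw [hunion]
          exact Set.mem_univ a
        rcases hau with h' | h'
        · exact absurd h' h
        · exact Or.inr ⟨h', h⟩
    rcases haV with ha₁ | ⟨ha₂, ha₁⟩
    · have hterm2 : ∀ i ∈ t₁, ∀ j ∈ t₂,
          (if B j ∩ K = A i ∩ K then (if a ∈ A i ∪ B j then Wt (i,j) else 0) else 0)
            = (if a ∈ A i then (if B j ∩ K = A i ∩ K then Wt (i,j) else 0) else 0) := by
        intro i hi j hj
        by_cases hm' : B j ∩ K = A i ∩ K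
        · have hiff : a ∈ A i ∪ B j ↔ a ∈ A i := by
            constructor
            · intro h
              rcases h with h | h
              · exact h
              · have hK' : a ∈ B j ∩ K := ⟨h, ha₁, hB₂ j h⟩
                rw [hm'] at hK'
                exact hK'.1
            · exact Or.inl
          by_cases hA : a ∈ A i
          · rw [if_pos hm', if_pos (hiff.mpr hA), if_pos hA, if_pos hm']
          · rw [if_pos hm', if_neg (fun h => hA (hiff.mp h)), if_neg hA]
        · rw [if_neg hm']
          by_cases hA : a ∈ A i
          · rw [if_pos hA, if_neg hm']
          · rw [if_neg hA]
      rw [Finset.sum_congr rfl fun i hi => Finset.sum_congr rfl fun j hj => hterm2 i hi j hj]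
      have hpull : ∀ i ∈ t₁,
          ∑ j ∈ t₂, (if a ∈ A i then (if B j ∩ K = A i ∩ K then Wt (i,j) else 0) else 0)
            = (if a ∈ A i then w i else 0) := by
        intro i hi
        by_cases hA : a ∈ A i
        · simp only [if_pos hA]
          exact key1 i hi
        · simp [hA]
      rw [Finset.sum_congr rfl hpull]
      exact hxc1 a ha₁
    · rw [Finset.sum_comm]
      have hterm2 : ∀ j ∈ t₂, ∀ i ∈ t₁,
          (if B j ∩ K = A i ∩ K then (if a ∈ A i ∪ B j then Wt (i,j) else 0) else 0)
            = (if a ∈ B j then (if B j ∩ K = A i ∩ K then Wt (i,j) else 0) else 0) := by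
        intro j hj i hi
        by_cases hm' : B j ∩ K = A i ∩ K
        · have hiff : a ∈ A i ∪ B j ↔ a ∈ B j := by
            constructor
            · intro h
              rcases h with h | h
              · exact absurd (hA₁ i h) ha₁
              · exact h
            · exact Or.inr
          by_cases hB : a ∈ B j
          · rw [if_pos hm', if_pos (hiff.mpr hB), if_pos hB, if_pos hm']
          · rw [if_pos hm', if_neg (fun h => hB (hiff.mp h)), if_neg hB]
        · rw [if_neg hm']
          by_cases hB : a ∈ B j
          · rw [if_pos hB, if_neg hm']
          · rw [if_neg hB]
      rw [Finset.sum_congr rfl fun j hj => Finset.sum_congr rfl fun i hi => hterm2 j hj i hi]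
      have hpull : ∀ j ∈ t₂,
          ∑ i ∈ t₁, (if a ∈ B j then (if B j ∩ K = A i ∩ K then Wt (i,j) else 0) else 0)
            = (if a ∈ B j then uu j else 0) := by
        intro j hj
        by_cases hB : a ∈ B j
        · simp only [if_pos hB]
          exact key2 j hj
        · simp [hB]
      rw [Finset.sum_congr rfl hpull]
      exact hxc2 a ha₂
  have hx_eq : T.centerMass Wt Pt = x := by
    rw [Finset.centerMass_eq_of_sum_1 _ _ hWsum]
    exact hsum
  rw [← hx_eq]
  exact Finset.centerMass_mem_convexHull T hW0 (by rw [hWsum]; norm_num) hPmem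

/-- if `(G₁,G₂)` is a separation of `G` whose separator `V(G₁) ∩ V(G₂)`
induces a complete graph, then `G` is t-perfect iff both `G₁` and `G₂` are t-perfect. -/
theorem stmt_17 {V : Type u} [Fintype V] (G : SimpleGraph V)
    (V₁ V₂ : Set V) (hunion : V₁ ∪ V₂ = Set.univ)
    (hprop₁ : V₁ ≠ Set.univ) (hprop₂ : V₂ ≠ Set.univ)
    (hedges : ∀ e ∈ G.edgeSet, (∀ x ∈ e, x ∈ V₁) ∨ (∀ x ∈ e, x ∈ V₂))
    (hclique : G.IsClique (V₁ ∩ V₂)) :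
    TPerfect G ↔ (TPerfect (G.induce V₁) ∧ TPerfect (G.induce V₂)) := by
  constructor
  · intro hG
    exact ⟨tperfect_induce V₁ hG, tperfect_induce V₂ hG⟩
  · rintro ⟨h₁, h₂⟩
    exact tperfect_glue V₁ V₂ hunion hedges hclique h₁ h₂
end

section
/- Let C be a cycle and let P and Q be two disjoint C-paths, with endvertices p1,p2 of P and q1,q2 of Q on C. If P and Q are not crossing on C, then C ∪ P ∪ Q contains two edge-disjoint cycles C1 and C2 such that C1 contains any prescribed edge e1 of C that is separated from P and Q, and similarly for C2; in particular, if C has exactly two odd-parity-carrying edges lying in distinct segments, C ∪ P ∪ Q contains two edge-disjoint odd cycles. -/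
open SimpleGraph

attribute [local instance] Classical.propDecidable

universe u

variable {V : Type u}

section AuxStmt18
variable {G : SimpleGraph V}

private lemma path_start_edge_unique {a b : V} {p : G.Walk a b} (hp : p.IsPath)
    {e f : Sym2 V} (he : e ∈ p.edges) (hf : f ∈ p.edges) (hae : a ∈ e) (haf : a ∈ f) :
    e = f := by
  induction p with
  | nil => simp at he
  | @cons x y z hadj q ih =>
    have hq : q.IsPath := hp.of_cons
    have hxs : x ∉ q.support := by
      have := hp.support_nodup
      simp [Walk.support_cons] at this
      exact this.1
    have key : ∀ g : Sym2 V, g ∈ (Walk.cons hadj q).edges → x ∈ g → g = s(x, y) := by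
      intro g hg hxg
      rw [Walk.edges_cons, List.mem_cons] at hg
      rcases hg with rfl | hg
      · rfl
      · exfalso
        obtain ⟨c, d⟩ := g
        rw [Sym2.mem_iff] at hxg
        rcases hxg with rfl | rfl
        · exact hxs (Walk.fst_mem_support_of_mem_edges q hg)
        · exact hxs (Walk.snd_mem_support_of_mem_edges q hg)
    rw [key e he hae, key f hf haf]

private lemma path_interior_two_edges {a b : V} {p : G.Walk a b} (hp : p.IsPath)
    {v : V} (hv : v ∈ p.support) (hva : v ≠ a) (hvb : v ≠ b) :
    ∃ e f, e ∈ p.edges ∧ f ∈ p.edges ∧ e ≠ f ∧ v ∈ e ∧ v ∈ f := by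
  induction p with
  | nil => simp at hv; exact absurd hv hva
  | @cons x y z hadj q ih =>
    have hq : q.IsPath := hp.of_cons
    have hxs : x ∉ q.support := by
      have := hp.support_nodup
      simp [Walk.support_cons] at this
      exact this.1
    rw [Walk.support_cons, List.mem_cons] at hv
    rcases hv with rfl | hv
    · exact absurd rfl hva
    by_cases hvy : v = y
    · subst hvy
      cases q with
      | nil => exact absurd rfl hvb
      | @cons _ w _ hadj2 q2 =>
        refine ⟨s(x, v), s(v, w), by simp [Walk.edges_cons], by simp [Walk.edges_cons], ?_, by simp, by simp⟩
        intro hcon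
        rw [Sym2.eq_iff] at hcon
        rcases hcon with ⟨rfl, rfl⟩ | ⟨rfl, h3⟩
        · exact hadj.ne rfl
        · exact hxs (by simp [Walk.support_cons])
    · obtain ⟨e, f, he, hf, hef, hve, hvf⟩ := ih hq hv hvy hvb
      exact ⟨e, f, by simp [Walk.edges_cons, he], by simp [Walk.edges_cons, hf], hef, hve, hvf⟩

private lemma cycle_not_three_edges {v₀ : V} {c : G.Walk v₀ v₀} (hc : c.IsCycle)
    {u : V} {e f g : Sym2 V} (he : e ∈ c.edges) (hf : f ∈ c.edges) (hg : g ∈ c.edges)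
    (hef : e ≠ f) (heg : e ≠ g) (hfg : f ≠ g)
    (hue : u ∈ e) (huf : u ∈ f) (hug : u ∈ g) : False := by
  classical
  have hu : u ∈ c.support := by
    obtain ⟨a, b⟩ := e
    rw [Sym2.mem_iff] at hue
    rcases hue with rfl | rfl
    · exact Walk.fst_mem_support_of_mem_edges c he
    · exact Walk.snd_mem_support_of_mem_edges c he
  set c' := c.rotate u hu with hc'
  have hcyc' : c'.IsCycle := hc.rotate hu
  have hedges : ∀ x : Sym2 V, x ∈ c'.edges ↔ x ∈ c.edges := fun x =>
    (Walk.rotate_edges c u hu).mem_iff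
  clear_value c'
  clear hc'
  cases c' with
  | nil => exact hcyc'.ne_nil rfl
  | @cons _ w _ hadj q =>
    have hq : q.IsPath := by
      constructor
      · exact hcyc'.isTrail.of_cons
      · have := hcyc'.support_nodup
        simpa [Walk.support_cons] using this
    have hqr : q.reverse.IsPath := hq.reverse
    have key : ∀ x : Sym2 V, x ∈ c.edges → u ∈ x → x ≠ s(u, w) → x ∈ q.reverse.edges := by
      intro x hx hux hne
      have : x ∈ (Walk.cons hadj q).edges := (hedges x).2 hx
      rw [Walk.edges_cons, List.mem_cons] at this
      rcases this with rfl | h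
      · exact absurd rfl hne
      · rw [Walk.edges_reverse]; simpa using h
    by_cases h1 : e = s(u, w)
    · subst h1
      have hf' := key f hf huf (Ne.symm hef)
      have hg' := key g hg hug (Ne.symm heg)
      exact hfg (path_start_edge_unique hqr hf' hg' huf hug)
    · by_cases h2 : f = s(u, w)
      · subst h2
        have he' := key e he hue h1
        have hg' := key g hg hug (Ne.symm hfg)
        exact heg (path_start_edge_unique hqr he' hg' hue hug)
      · have he' := key e he hue h1
        have hf' := key f hf huf h2
        exact hef (path_start_edge_unique hqr he' hf' hue huf)

private lemma mem_edge_of_mem_support {a b : V} {w : G.Walk a b} (hw : 0 < w.length)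
    {v : V} (hv : v ∈ w.support) : ∃ e ∈ w.edges, v ∈ e := by
  induction w with
  | nil => simp at hw
  | @cons x y z hadj q ih =>
    rw [Walk.support_cons, List.mem_cons] at hv
    rcases hv with rfl | hv
    · exact ⟨s(v, y), by simp [Walk.edges_cons], by simp⟩
    cases q with
    | nil =>
      simp at hv
      subst hv
      exact ⟨s(x, v), by simp [Walk.edges_cons], by simp⟩
    | cons h2 q2 =>
      obtain ⟨e, he, hve⟩ := ih (by simp) hv
      exact ⟨e, by rw [Walk.edges_cons]; exact List.mem_cons_of_mem _ he, hve⟩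

private lemma support_subset_of_edges_subset {v₀ : V} {c : G.Walk v₀ v₀}
    {a b : V} {w : G.Walk a b} (hw : 0 < w.length)
    (hsub : ∀ e ∈ w.edges, e ∈ c.edges) {v : V} (hv : v ∈ w.support) :
    v ∈ c.support := by
  obtain ⟨e, he, hve⟩ := mem_edge_of_mem_support hw hv
  obtain ⟨x, y⟩ := e
  rw [Sym2.mem_iff] at hve
  rcases hve with rfl | rfl
  · exact Walk.fst_mem_support_of_mem_edges c (hsub _ he)
  · exact Walk.snd_mem_support_of_mem_edges c (hsub _ he)

/-- Key disjointness: a walk along c starting off W₁ and avoiding W₁'s endpoints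
stays off W₁. -/

private lemma walk_avoids_path {v₀ : V} {c : G.Walk v₀ v₀} (hc : c.IsCycle)
    {p₁ p₂ : V} {W₁ : G.Walk p₁ p₂} (hW₁ : W₁.IsPath)
    (hW₁c : ∀ e ∈ W₁.edges, e ∈ c.edges)
    {x y : V} (w : G.Walk x y) (hwc : ∀ e ∈ w.edges, e ∈ c.edges)
    (hx : x ∉ W₁.support) (hp₁ : p₁ ∉ w.support) (hp₂ : p₂ ∉ w.support) :
    ∀ v ∈ w.support, v ∉ W₁.support := by
  induction w with
  | nil => intro v hv; simp at hv; subst hv; exact hx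
  | @cons x' y' z' hadj q ih =>
    intro v hv
    rw [Walk.support_cons, List.mem_cons] at hv
    have hy' : y' ∉ W₁.support := by
      intro hy
      have hxy : s(x', y') ∈ c.edges := hwc _ (by simp [Walk.edges_cons])
      have hxyW : s(x', y') ∉ W₁.edges := by
        intro hmem
        exact hx (Walk.fst_mem_support_of_mem_edges W₁ hmem)
      have hy1 : y' ≠ p₁ := fun h => hp₁ (by subst h; simp [Walk.support_cons])
      have hy2 : y' ≠ p₂ := fun h => hp₂ (by subst h; simp [Walk.support_cons])
      obtain ⟨e, f, he, hf, hef, hye, hyf⟩ := path_interior_two_edges hW₁ hy hy1 hy2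
      have hne1 : s(x', y') ≠ e := fun h => hxyW (h ▸ he)
      have hne2 : s(x', y') ≠ f := fun h => hxyW (h ▸ hf)
      exact cycle_not_three_edges hc hxy (hW₁c e he) (hW₁c f hf) hne1 hne2 hef
        (by simp) hye hyf
    rcases hv with rfl | hv
    · exact hx
    · exact ih (fun e he => hwc e (by simp [Walk.edges_cons, he])) hy'
        (fun h => hp₁ (by simp [Walk.support_cons, h]))
        (fun h => hp₂ (by simp [Walk.support_cons, h])) v hv

private lemma glue_is_cycle {v₀ : V} {c : G.Walk v₀ v₀}
    {p₁ p₂ : V} {P : G.Walk p₁ p₂} (hP : P.IsPath) (hPl : 0 < P.length)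
    (hPint : ∀ x ∈ P.support, x ≠ p₁ → x ≠ p₂ → x ∉ c.support)
    (hPe : ∀ e ∈ P.edges, e ∉ c.edges)
    {W : G.Walk p₁ p₂} (hW : W.IsPath) (hWl : 0 < W.length)
    (hWc : ∀ e ∈ W.edges, e ∈ c.edges) :
    (W.append P.reverse).IsCycle := by
  constructor
  · constructor
    · constructor
      rw [Walk.edges_append, Walk.edges_reverse]
      refine List.Nodup.append hW.edges_nodup (List.nodup_reverse.mpr hP.edges_nodup) ?_
      intro e heW heP
      rw [List.mem_reverse] at heP
      exact hPe e heP (hWc e heW)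
    · intro hnil
      have := congrArg Walk.length hnil
      rw [Walk.length_append, Walk.length_reverse] at this
      simp at this
      rw [Walk.nil_iff_length_eq, Walk.nil_iff_length_eq] at this
      omega
  · rw [Walk.support_append, Walk.support_eq_cons W]
    rw [List.cons_append, List.tail_cons]
    have hWnd := hW.support_nodup
    rw [Walk.support_eq_cons W] at hWnd
    have hPnd := hP.reverse.support_nodup
    rw [Walk.support_eq_cons P.reverse] at hPnd
    refine List.Nodup.append hWnd.of_cons hPnd.of_cons ?_
    · intro v hvW hvP
      have hvWs : v ∈ W.support := by rw [Walk.support_eq_cons W]; exact List.mem_cons_of_mem _ hvW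
      have hvPs : v ∈ P.support := by
        have : v ∈ P.reverse.support := by
          rw [Walk.support_eq_cons P.reverse]; exact List.mem_cons_of_mem _ hvP
        rwa [Walk.support_reverse, List.mem_reverse] at this
      by_cases h1 : v = p₁
      · subst h1
        exact (List.nodup_cons.mp hWnd).1 hvW
      by_cases h2 : v = p₂
      · subst h2
        exact (List.nodup_cons.mp hPnd).1 hvP
      · exact hPint v hvPs h1 h2 (support_subset_of_edges_subset hWl hWc hvWs)

private lemma pOdd_pair (A : Set V) (x y : V) :
    POdd A s(x, y) ↔ ((x ∈ A ∧ y ∈ A) ∨ (x ∉ A ∧ y ∉ A)) := by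
  unfold POdd
  constructor
  · rintro (h | h)
    · exact Or.inl ⟨h x (by simp), h y (by simp)⟩
    · exact Or.inr ⟨h x (by simp), h y (by simp)⟩
  · rintro (⟨h1, h2⟩ | ⟨h1, h2⟩)
    · exact Or.inl (fun z hz => by rw [Sym2.mem_iff] at hz; rcases hz with rfl|rfl <;> assumption)
    · exact Or.inr (fun z hz => by rw [Sym2.mem_iff] at hz; rcases hz with rfl|rfl <;> assumption)

private lemma parity_count (A : Set V) {a b : V} (w : G.Walk a b) :
    ((w.edges.countP (fun e => decide (¬ POdd A e))) : ZMod 2)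
      = (if a ∈ A then 0 else 1) + (if b ∈ A then 0 else 1) := by
  induction w with
  | nil => rename_i u; by_cases h : u ∈ A <;> simp [h] <;> decide
  | @cons x y z hadj q ih =>
    rw [Walk.edges_cons, List.countP_cons]
    push_cast
    rw [ih]
    by_cases hx : x ∈ A <;> by_cases hy : y ∈ A <;> by_cases hz : z ∈ A <;>
      simp [hx, hy, hz, pOdd_pair] <;> decide

/-- if a closed walk has an odd number of POdd edges, its length is odd -/

private lemma closed_walk_odd (A : Set V) {a : V} (C : G.Walk a a)
    (h1 : Odd (C.edges.countP (fun e => decide (POdd A e)))) : Odd C.length := by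
  have heven : Even (C.edges.countP (fun e => decide (¬ POdd A e))) := by
    have := parity_count A C
    have h0 : ((C.edges.countP (fun e => decide (¬ POdd A e))) : ZMod 2) = 0 := by
      rw [this]; by_cases h : a ∈ A <;> simp [h] <;> decide
    rw [ZMod.natCast_eq_zero_iff] at h0
    exact even_iff_two_dvd.mpr h0
  have hlen : C.length = C.edges.countP (fun e => decide (POdd A e))
      + C.edges.countP (fun e => decide (¬ POdd A e)) := by
    rw [← Walk.length_edges, List.length_eq_countP_add_countP (fun e => decide (POdd A e))]
    congr 1
    refine List.countP_congr fun e _ => ?_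
    simp
  rw [hlen]
  exact h1.add_even heven

/-- helper for counting exactly one good element -/

private lemma countP_eq_one_of {α : Type*} [DecidableEq α] {l : List α} (hl : l.Nodup)
    {p : α → Bool} {e : α} (he : e ∈ l) (hpe : p e)
    (huniq : ∀ x ∈ l, p x → x = e) : l.countP p = 1 := by
  have : l.countP p = l.count e := by
    rw [List.count]
    refine List.countP_congr fun x hx => ?_
    simp only [beq_iff_eq]
    constructor
    · intro h; exact huniq x hx h
    · intro h; subst h; exact hpe
  rw [this]
  exact List.count_eq_one_of_mem hl he

end AuxStmt18

/-- let `c` be a cycle and `P`, `Q` two disjoint `c`-paths which are not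
crossing on `c`; the non-crossing is witnessed by an arc of `c` from `p₁` to `p₂`
avoiding `q₁,q₂` containing a prescribed edge `e₁` (i.e. `e₁` is separated from `P` and
`Q`), and an arc from `q₁` to `q₂` avoiding `p₁,p₂` containing `e₂`. Then `c ∪ P ∪ Q`
contains two edge-disjoint cycles, one through `P` and `e₁`, the other through `Q` and
`e₂`; in particular if `e₁,e₂` are the only parity-carrying (P-odd) edges, the two
cycles are odd. -/

theorem stmt_18 {V : Type u} (G : SimpleGraph V)
    (v : V) (c : G.Walk v v) (hc : c.IsCycle)
    (p₁ p₂ q₁ q₂ : V) (P : G.Walk p₁ p₂) (Q : G.Walk q₁ q₂)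
    (hP : P.IsPath) (hQ : Q.IsPath) (hPl : 0 < P.length) (hQl : 0 < Q.length)
    (hp₁ : p₁ ∈ c.support) (hp₂ : p₂ ∈ c.support)
    (hq₁ : q₁ ∈ c.support) (hq₂ : q₂ ∈ c.support)
    (hPint : ∀ x ∈ P.support, x ≠ p₁ → x ≠ p₂ → x ∉ c.support)
    (hQint : ∀ x ∈ Q.support, x ≠ q₁ → x ≠ q₂ → x ∉ c.support)
    (hPe : ∀ e ∈ P.edges, e ∉ c.edges) (hQe : ∀ e ∈ Q.edges, e ∉ c.edges)
    (hdisj : P.support.Disjoint Q.support)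
    (e₁ e₂ : Sym2 V)
    (h₁ : ∃ W : G.Walk p₁ p₂, W.IsPath ∧ (∀ e ∈ W.edges, e ∈ c.edges) ∧
      e₁ ∈ W.edges ∧ q₁ ∉ W.support ∧ q₂ ∉ W.support)
    (h₂ : ∃ W : G.Walk q₁ q₂, W.IsPath ∧ (∀ e ∈ W.edges, e ∈ c.edges) ∧
      e₂ ∈ W.edges ∧ p₁ ∉ W.support ∧ p₂ ∉ W.support) :
    ∃ (a b : V) (C₁ : G.Walk a a) (C₂ : G.Walk b b),
      C₁.IsCycle ∧ C₂.IsCycle ∧ WalkEdgeDisjoint C₁ C₂ ∧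
      (∀ e ∈ C₁.edges, e ∈ c.edges ∨ e ∈ P.edges) ∧
      (∀ e ∈ C₂.edges, e ∈ c.edges ∨ e ∈ Q.edges) ∧
      (∀ e ∈ P.edges, e ∈ C₁.edges) ∧ (∀ e ∈ Q.edges, e ∈ C₂.edges) ∧
      e₁ ∈ C₁.edges ∧ e₂ ∈ C₂.edges ∧
      (∀ A : Set V, (∀ e ∈ c.edges, POdd A e → e = e₁ ∨ e = e₂) →
        POdd A e₁ → POdd A e₂ →
        (∀ e ∈ P.edges, ¬ POdd A e) → (∀ e ∈ Q.edges, ¬ POdd A e) →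
        Odd C₁.length ∧ Odd C₂.length) := by
  obtain ⟨W₁, hW₁p, hW₁c, he₁W, hq₁W, hq₂W⟩ := h₁
  obtain ⟨W₂, hW₂p, hW₂c, he₂W, hp₁W, hp₂W⟩ := h₂
  have hW₁l : 0 < W₁.length := by
    rw [← Walk.length_edges]
    exact List.length_pos_iff.mpr (List.ne_nil_of_mem he₁W)
  have hW₂l : 0 < W₂.length := by
    rw [← Walk.length_edges]
    exact List.length_pos_iff.mpr (List.ne_nil_of_mem he₂W)
  -- vertex disjointness of the two arcs
  have hvdisj : ∀ u ∈ W₂.support, u ∉ W₁.support :=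
    walk_avoids_path hc hW₁p hW₁c W₂ hW₂c hq₁W hp₁W hp₂W
  -- edge disjointness of the two arcs
  have hWW : ∀ e, e ∈ W₁.edges → e ∉ W₂.edges := by
    rintro ⟨x, y⟩ h1 h2
    exact hvdisj x (Walk.fst_mem_support_of_mem_edges W₂ h2)
      (Walk.fst_mem_support_of_mem_edges W₁ h1)
  -- edge disjointness of P and Q
  have hPQ : ∀ e, e ∈ P.edges → e ∉ Q.edges := by
    rintro ⟨x, y⟩ h1 h2
    exact hdisj (Walk.fst_mem_support_of_mem_edges P h1)
      (Walk.fst_mem_support_of_mem_edges Q h2)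
  refine ⟨p₁, q₁, W₁.append P.reverse, W₂.append Q.reverse,
    glue_is_cycle hP hPl hPint hPe hW₁p hW₁l hW₁c,
    glue_is_cycle hQ hQl hQint hQe hW₂p hW₂l hW₂c, ?_, ?_, ?_, ?_, ?_, ?_, ?_, ?_⟩
  · -- WalkEdgeDisjoint
    intro e he1 he2
    rw [Walk.edges_append, Walk.edges_reverse, List.mem_append, List.mem_reverse] at he1 he2
    rcases he1 with he1 | he1 <;> rcases he2 with he2 | he2
    · exact hWW e he1 he2
    · exact hQe e he2 (hW₁c e he1)
    · exact hPe e he1 (hW₂c e he2)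
    · exact hPQ e he1 he2
  · intro e he
    rw [Walk.edges_append, Walk.edges_reverse, List.mem_append, List.mem_reverse] at he
    rcases he with he | he
    · exact Or.inl (hW₁c e he)
    · exact Or.inr he
  · intro e he
    rw [Walk.edges_append, Walk.edges_reverse, List.mem_append, List.mem_reverse] at he
    rcases he with he | he
    · exact Or.inl (hW₂c e he)
    · exact Or.inr he
  · intro e he
    rw [Walk.edges_append, Walk.edges_reverse, List.mem_append, List.mem_reverse]
    exact Or.inr he
  · intro e he
    rw [Walk.edges_append, Walk.edges_reverse, List.mem_append, List.mem_reverse]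
    exact Or.inr he
  · rw [Walk.edges_append, List.mem_append]
    exact Or.inl he₁W
  · rw [Walk.edges_append, List.mem_append]
    exact Or.inl he₂W
  · intro A hcA hA1 hA2 hAP hAQ
    have he₁ne₂ : e₁ ∉ W₂.edges := fun h => hWW e₁ he₁W h
    have he₂ne₁ : e₂ ∉ W₁.edges := fun h => hWW e₂ h he₂W
    constructor
    · refine closed_walk_odd A _ ?_
      rw [Walk.edges_append, List.countP_append]
      have hz : (P.reverse.edges).countP (fun e => decide (POdd A e)) = 0 := by
        rw [List.countP_eq_zero]
        intro e he
        rw [Walk.edges_reverse, List.mem_reverse] at he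
        simpa using hAP e he
      have ho : (W₁.edges).countP (fun e => decide (POdd A e)) = 1 := by
        refine countP_eq_one_of hW₁p.edges_nodup he₁W (by simpa using hA1) ?_
        intro x hx hpx
        rcases hcA x (hW₁c x hx) (by simpa using hpx) with rfl | rfl
        · rfl
        · exact absurd hx he₂ne₁
      rw [hz, ho]
      exact ⟨0, rfl⟩
    · refine closed_walk_odd A _ ?_
      rw [Walk.edges_append, List.countP_append]
      have hz : (Q.reverse.edges).countP (fun e => decide (POdd A e)) = 0 := by
        rw [List.countP_eq_zero]
        intro e he
        rw [Walk.edges_reverse, List.mem_reverse] at he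
        simpa using hAQ e he
      have ho : (W₂.edges).countP (fun e => decide (POdd A e)) = 1 := by
        refine countP_eq_one_of hW₂p.edges_nodup he₂W (by simpa using hA2) ?_
        intro x hx hpx
        rcases hcA x (hW₂c x hx) (by simpa using hpx) with rfl | rfl
        · exact absurd hx he₁ne₂
        · rfl
      rw [hz, ho]
      exact ⟨0, rfl⟩
end
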